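/- arXiv:math/0501300 — 4 statements merged into one kernel-verified Lean document; each statement's English description precedes it below -/
import Mathlib

section
/- Let s, t ∈ ℝ with s ≥ −1 and t ≥ −1. Then for all P, Q ∈ Γ_n with r ≤ p_i/q_i ≤ R for all i: r^{t+1} ((r+1)/2)^{s−t} Ω_t(P||Q) ≤ Ω_s(Q||P) ≤ R^{t+1} ((R+1)/2)^{s−t} Ω_t(P||Q). -/
open Real Finset

/-- Relative information of type `s` (generalized Kullback-Leibler divergence). -/
noncomputable def Phi (n : ℕ) (s : ℝ) (p q : Fin n → ℝ) : ℝ :=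
  if s = 0 then ∑ i, q i * Real.log (q i / p i)
  else if s = 1 then ∑ i, p i * Real.log (p i / q i)
  else (s * (s - 1))⁻¹ * ((∑ i, (p i) ^ s * (q i) ^ (1 - s)) - 1)

/-- Unified relative JS and AG divergence of type `s`. -/
noncomputable def Omega (n : ℕ) (s : ℝ) (p q : Fin n → ℝ) : ℝ :=
  if s = 0 then ∑ i, p i * Real.log (2 * p i / (p i + q i))
  else if s = 1 then ∑ i, ((p i + q i) / 2) * Real.log ((p i + q i) / (2 * p i))
  else (s * (s - 1))⁻¹ * ((∑ i, p i * ((p i + q i) / (2 * p i)) ^ s) - 1)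

/-- Relative J-divergence of type `s`. -/
noncomputable def zeta (n : ℕ) (s : ℝ) (p q : Fin n → ℝ) : ℝ :=
  if s = 1 then ∑ i, (p i - q i) * Real.log ((p i + q i) / (2 * q i))
  else (s - 1)⁻¹ * ∑ i, (p i - q i) * ((p i + q i) / (2 * q i)) ^ (s - 1)

noncomputable def psiF (s x : ℝ) : ℝ :=
  if s = 0 then - Real.log ((x+1)/2)
  else if s = 1 then ((x+1)/2) * Real.log ((x+1)/2)
  else (s*(s-1))⁻¹ * (((x+1)/2) ^ s - 1)

noncomputable def psiD (s x : ℝ) : ℝ :=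
  if s = 0 then -(x+1)⁻¹
  else if s = 1 then (Real.log ((x+1)/2) + 1)/2
  else (s-1)⁻¹ * (1/2) * ((x+1)/2) ^ (s-1)

noncomputable def psiDD (s x : ℝ) : ℝ := (1/4) * ((x+1)/2) ^ (s-2)

lemma hasDerivAt_half_affine (x : ℝ) : HasDerivAt (fun y : ℝ => (y+1)/2) (1/2) x := by
  simpa using ((hasDerivAt_id x).add_const 1).div_const 2

lemma hasDerivAt_psiF (s x : ℝ) (hx : 0 < x) : HasDerivAt (psiF s) (psiD s x) x := by
  have hv : (0:ℝ) < (x+1)/2 := by linarith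
  by_cases h0 : s = 0
  · have e : psiF s = fun y => - Real.log ((y+1)/2) := by funext y; simp [psiF, h0]
    have e2 : psiD s x = -(x+1)⁻¹ := by simp [psiD, h0]
    rw [e, e2]
    have := ((hasDerivAt_half_affine x).log hv.ne').neg
    refine this.congr_deriv (Eq.symm ?_)
    field_simp
  by_cases h1 : s = 1
  · have e : psiF s = fun y => ((y+1)/2) * Real.log ((y+1)/2) := by
      funext y; simp [psiF, h0, h1]
    have e2 : psiD s x = (Real.log ((x+1)/2) + 1)/2 := by simp [psiD, h0, h1]
    rw [e, e2]
    have hl := (hasDerivAt_half_affine x).log hv.ne'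
    have := (hasDerivAt_half_affine x).mul hl
    refine this.congr_deriv (Eq.symm ?_)
    field_simp
  · have e : psiF s = fun y => (s*(s-1))⁻¹ * (((y+1)/2) ^ s - 1) := by
      funext y; simp [psiF, h0, h1]
    have e2 : psiD s x = (s-1)⁻¹ * (1/2) * ((x+1)/2) ^ (s-1) := by simp [psiD, h0, h1]
    rw [e, e2]
    have hpow := (hasDerivAt_half_affine x).rpow_const (p := s) (Or.inl hv.ne')
    have := (hpow.sub_const 1).const_mul ((s*(s-1))⁻¹)
    refine this.congr_deriv (Eq.symm ?_)
    have hs0 : s ≠ 0 := h0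
    have hs1 : s - 1 ≠ 0 := sub_ne_zero.2 h1
    field_simp

lemma hasDerivAt_psiD (s x : ℝ) (hx : 0 < x) : HasDerivAt (psiD s) (psiDD s x) x := by
  have hv : (0:ℝ) < (x+1)/2 := by linarith
  have hx1 : (0:ℝ) < x + 1 := by linarith
  unfold psiDD
  by_cases h0 : s = 0
  · have e : psiD s = fun y => -(y+1)⁻¹ := by funext y; simp [psiD, h0]
    rw [e]
    have := (((hasDerivAt_id x).add_const 1).inv hx1.ne').neg
    refine this.congr_deriv (Eq.symm ?_)
    rw [h0]
    rw [show (0:ℝ)-2 = -((2:ℕ):ℝ) by norm_num, Real.rpow_neg hv.le, Real.rpow_natCast]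
    simp only [id_eq]
    field_simp
    ring
  by_cases h1 : s = 1
  · have e : psiD s = fun y => (Real.log ((y+1)/2) + 1)/2 := by funext y; simp [psiD, h0, h1]
    rw [e]
    have := (((hasDerivAt_half_affine x).log hv.ne').add_const 1).div_const 2
    refine this.congr_deriv (Eq.symm ?_)
    rw [h1]
    rw [show (1:ℝ)-2 = -((1:ℕ):ℝ) by norm_num, Real.rpow_neg hv.le, Real.rpow_natCast]
    field_simp
    ring
  · have e : psiD s = fun y => (s-1)⁻¹ * (1/2) * ((y+1)/2) ^ (s-1) := by
      funext y; simp [psiD, h0, h1]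
    rw [e]
    have hpow := (hasDerivAt_half_affine x).rpow_const (p := s-1) (Or.inl hv.ne')
    have := hpow.const_mul ((s-1)⁻¹ * (1/2))
    refine this.congr_deriv (Eq.symm ?_)
    have hs1 : s - 1 ≠ 0 := sub_ne_zero.2 h1
    rw [show s - 1 - 1 = s - 2 by ring]
    field_simp
    ring

noncomputable def phiF (t x : ℝ) : ℝ :=
  if t = 0 then x * Real.log (2*x/(x+1))
  else if t = 1 then ((x+1)/2) * Real.log ((x+1)/(2*x))
  else (t*(t-1))⁻¹ * (x ^ (1-t) * ((x+1)/2) ^ t - 1)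

noncomputable def phiD (t x : ℝ) : ℝ :=
  if t = 0 then Real.log (2*x/(x+1)) + (x+1)⁻¹
  else if t = 1 then (Real.log ((x+1)/(2*x)))/2 - (2*x)⁻¹
  else (t*(t-1))⁻¹ * ((1-t) * x^(-t) * ((x+1)/2)^t + (t/2) * x^(1-t) * ((x+1)/2)^(t-1))

noncomputable def phiDD (t x : ℝ) : ℝ := (1/4) * x^(-t-1) * ((x+1)/2)^(t-2)

lemma hasDerivAt_L0 (x : ℝ) (hx : 0 < x) :
    HasDerivAt (fun y : ℝ => Real.log (2*y/(y+1))) ((x*(x+1))⁻¹) x := by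
  have hx1 : (0:ℝ) < x + 1 := by linarith
  have hnum : HasDerivAt (fun y : ℝ => 2*y) 2 x := by
    simpa using (hasDerivAt_id x).const_mul 2
  have hden : HasDerivAt (fun y : ℝ => y+1) 1 x := (hasDerivAt_id x).add_const 1
  have hdiv := hnum.div hden hx1.ne'
  have hfx : 2*x/(x+1) ≠ 0 := by positivity
  have := hdiv.log hfx
  refine this.congr_deriv (Eq.symm ?_)
  simp only [Pi.div_apply]
  field_simp
  ring

lemma hasDerivAt_L1 (x : ℝ) (hx : 0 < x) :
    HasDerivAt (fun y : ℝ => Real.log ((y+1)/(2*y))) (-(x*(x+1))⁻¹) x := by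
  have hx1 : (0:ℝ) < x + 1 := by linarith
  have hden : HasDerivAt (fun y : ℝ => 2*y) 2 x := by
    simpa using (hasDerivAt_id x).const_mul 2
  have hnum : HasDerivAt (fun y : ℝ => y+1) 1 x := (hasDerivAt_id x).add_const 1
  have hdiv := hnum.div hden (by positivity)
  have hfx : (x+1)/(2*x) ≠ 0 := by positivity
  have := hdiv.log hfx
  refine this.congr_deriv (Eq.symm ?_)
  simp only [Pi.div_apply]
  field_simp
  ring

lemma hasDerivAt_phiF (t x : ℝ) (hx : 0 < x) : HasDerivAt (phiF t) (phiD t x) x := by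
  have hv : (0:ℝ) < (x+1)/2 := by linarith
  have hx1 : (0:ℝ) < x + 1 := by linarith
  by_cases h0 : t = 0
  · have e : phiF t = fun y => y * Real.log (2*y/(y+1)) := by funext y; simp [phiF, h0]
    have e2 : phiD t x = Real.log (2*x/(x+1)) + (x+1)⁻¹ := by simp [phiD, h0]
    rw [e, e2]
    have := (hasDerivAt_id x).mul (hasDerivAt_L0 x hx)
    refine this.congr_deriv (Eq.symm ?_)
    simp only [id_eq]
    field_simp
  by_cases h1 : t = 1
  · have e : phiF t = fun y => ((y+1)/2) * Real.log ((y+1)/(2*y)) := by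
      funext y; simp [phiF, h0, h1]
    have e2 : phiD t x = (Real.log ((x+1)/(2*x)))/2 - (2*x)⁻¹ := by simp [phiD, h0, h1]
    rw [e, e2]
    have := (hasDerivAt_half_affine x).mul (hasDerivAt_L1 x hx)
    refine this.congr_deriv (Eq.symm ?_)
    field_simp
    ring
  · have e : phiF t = fun y => (t*(t-1))⁻¹ * (y ^ (1-t) * ((y+1)/2) ^ t - 1) := by
      funext y; simp [phiF, h0, h1]
    have e2 : phiD t x =
        (t*(t-1))⁻¹ * ((1-t) * x^(-t) * ((x+1)/2)^t + (t/2) * x^(1-t) * ((x+1)/2)^(t-1)) := by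
      simp [phiD, h0, h1]
    rw [e, e2]
    have h1' := (hasDerivAt_id x).rpow_const (p := 1-t) (Or.inl hx.ne')
    have h2' := (hasDerivAt_half_affine x).rpow_const (p := t) (Or.inl hv.ne')
    have := ((h1'.mul h2').sub_const 1).const_mul ((t*(t-1))⁻¹)
    refine this.congr_deriv (Eq.symm ?_)
    rw [show (1:ℝ)-t-1 = -t by ring]
    simp only [id_eq]
    ring

lemma hasDerivAt_phiD (t x : ℝ) (hx : 0 < x) : HasDerivAt (phiD t) (phiDD t x) x := by
  have hv : (0:ℝ) < (x+1)/2 := by linarith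
  have hx1 : (0:ℝ) < x + 1 := by linarith
  unfold phiDD
  by_cases h0 : t = 0
  · have e : phiD t = fun y => Real.log (2*y/(y+1)) + (y+1)⁻¹ := by funext y; simp [phiD, h0]
    rw [e]
    have := (hasDerivAt_L0 x hx).add (((hasDerivAt_id x).add_const 1).inv hx1.ne')
    refine this.congr_deriv (Eq.symm ?_)
    rw [h0]
    rw [show -(0:ℝ)-1 = -((1:ℕ):ℝ) by norm_num]
    rw [show (0:ℝ)-2 = -((2:ℕ):ℝ) by norm_num]
    rw [Real.rpow_neg hx.le, Real.rpow_neg hv.le, Real.rpow_natCast, Real.rpow_natCast]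
    simp only [id_eq]
    field_simp
    ring
  by_cases h1 : t = 1
  · have e : phiD t = fun y => (Real.log ((y+1)/(2*y)))/2 - (2*y)⁻¹ := by
      funext y; simp [phiD, h0, h1]
    rw [e]
    have hinv : HasDerivAt (fun y : ℝ => (2*y)⁻¹) (-2/(2*x)^2) x := by
      have : HasDerivAt (fun y : ℝ => 2*y) 2 x := by simpa using (hasDerivAt_id x).const_mul 2
      exact this.inv (by positivity)
    have := ((hasDerivAt_L1 x hx).div_const 2).sub hinv
    refine this.congr_deriv (Eq.symm ?_)
    rw [h1]
    rw [show -(1:ℝ)-1 = -((2:ℕ):ℝ) by norm_num]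
    rw [show (1:ℝ)-2 = -((1:ℕ):ℝ) by norm_num]
    rw [Real.rpow_neg hx.le, Real.rpow_neg hv.le, Real.rpow_natCast, Real.rpow_natCast]
    field_simp
    ring
  · have e : phiD t = fun y =>
        (t*(t-1))⁻¹ * ((1-t) * y^(-t) * ((y+1)/2)^t + (t/2) * y^(1-t) * ((y+1)/2)^(t-1)) := by
      funext y; simp [phiD, h0, h1]
    rw [e]
    have ha := (hasDerivAt_id x).rpow_const (p := -t) (Or.inl hx.ne')
    have hb := (hasDerivAt_half_affine x).rpow_const (p := t) (Or.inl hv.ne')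
    have hc := (hasDerivAt_id x).rpow_const (p := 1-t) (Or.inl hx.ne')
    have hd := (hasDerivAt_half_affine x).rpow_const (p := t-1) (Or.inl hv.ne')
    have hterm1 := (ha.const_mul (1-t)).mul hb
    have hterm2 := (hc.const_mul (t/2)).mul hd
    have := (hterm1.add hterm2).const_mul ((t*(t-1))⁻¹)
    refine this.congr_deriv (Eq.symm ?_)
    simp only [id_eq]
    rw [show (1:ℝ)-t-1 = -t by ring, show t-1-1 = t-2 by ring]
    have ex0 : x ^ (-t) = x ^ (-t-1) * x := by
      have h := Real.rpow_add hx (-t-1) 1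
      rw [Real.rpow_one] at h
      rw [show -t-1+1 = -t by ring] at h
      exact h
    have ex1 : x ^ (1-t) = x ^ (-t-1) * x * x := by
      have h := Real.rpow_add hx (-t) 1
      rw [Real.rpow_one] at h
      rw [show -t+1 = 1-t by ring] at h
      rw [h, ex0]
    have ev1 : ((x+1)/2) ^ (t-1) = ((x+1)/2) ^ (t-2) * ((x+1)/2) := by
      have h := Real.rpow_add hv (t-2) 1
      rw [Real.rpow_one] at h
      rw [show t-2+1 = t-1 by ring] at h
      exact h
    have ev0 : ((x+1)/2) ^ t = ((x+1)/2) ^ (t-2) * ((x+1)/2) * ((x+1)/2) := by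
      have h := Real.rpow_add hv (t-1) 1
      rw [Real.rpow_one] at h
      rw [show t-1+1 = t by ring] at h
      rw [h, ev1]
    rw [ex0, ex1, ev0, ev1]
    have ht0 : t ≠ 0 := h0
    have ht1' : t - 1 ≠ 0 := sub_ne_zero.2 h1
    field_simp
    ring

lemma monoOn_of_hasDeriv (f f' : ℝ → ℝ) (a b : ℝ)
    (hd : ∀ x ∈ Set.Icc a b, HasDerivAt f (f' x) x)
    (h0 : ∀ x ∈ Set.Ioo a b, 0 ≤ f' x) : MonotoneOn f (Set.Icc a b) := by
  apply monotoneOn_of_deriv_nonneg (convex_Icc a b)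
  · exact fun x hx => (hd x hx).continuousAt.continuousWithinAt
  · intro x hx
    rw [interior_Icc] at hx
    exact (hd x (Set.Ioo_subset_Icc_self hx)).differentiableAt.differentiableWithinAt
  · intro x hx
    rw [interior_Icc] at hx
    rw [(hd x (Set.Ioo_subset_Icc_self hx)).deriv]
    exact h0 x hx

lemma antiOn_of_hasDeriv (f f' : ℝ → ℝ) (a b : ℝ)
    (hd : ∀ x ∈ Set.Icc a b, HasDerivAt f (f' x) x)
    (h0 : ∀ x ∈ Set.Ioo a b, f' x ≤ 0) : AntitoneOn f (Set.Icc a b) := by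
  apply antitoneOn_of_deriv_nonpos (convex_Icc a b)
  · exact fun x hx => (hd x hx).continuousAt.continuousWithinAt
  · intro x hx
    rw [interior_Icc] at hx
    exact (hd x (Set.Ioo_subset_Icc_self hx)).differentiableAt.differentiableWithinAt
  · intro x hx
    rw [interior_Icc] at hx
    rw [(hd x (Set.Ioo_subset_Icc_self hx)).deriv]
    exact h0 x hx

lemma key_nonneg (F F' F'' : ℝ → ℝ) (r R : ℝ) (h1 : r ≤ 1) (h1R : 1 ≤ R)
    (hd : ∀ x ∈ Set.Icc r R, HasDerivAt F (F' x) x)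
    (hd2 : ∀ x ∈ Set.Icc r R, HasDerivAt F' (F'' x) x)
    (hF1 : F 1 = 0) (hF'1 : F' 1 = 0)
    (hpos : ∀ x ∈ Set.Icc r R, 0 ≤ F'' x) :
    ∀ x ∈ Set.Icc r R, 0 ≤ F x := by
  have h1mem : (1:ℝ) ∈ Set.Icc r R := ⟨h1, h1R⟩
  have hmono' : MonotoneOn F' (Set.Icc r R) :=
    monoOn_of_hasDeriv F' F'' r R hd2 (fun x hx => hpos x (Set.Ioo_subset_Icc_self hx))
  have hsub1 : Set.Icc r 1 ⊆ Set.Icc r R := Set.Icc_subset_Icc_right h1R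
  have hsub2 : Set.Icc 1 R ⊆ Set.Icc r R := Set.Icc_subset_Icc_left h1
  have hanti : AntitoneOn F (Set.Icc r 1) := by
    apply antiOn_of_hasDeriv F F' r 1 (fun x hx => hd x (hsub1 hx))
    intro x hx
    have hxm : x ∈ Set.Icc r R := hsub1 (Set.Ioo_subset_Icc_self hx)
    have := hmono' hxm h1mem (le_of_lt hx.2)
    linarith [hF'1]
  have hmono : MonotoneOn F (Set.Icc 1 R) := by
    apply monoOn_of_hasDeriv F F' 1 R (fun x hx => hd x (hsub2 hx))
    intro x hx
    have hxm : x ∈ Set.Icc r R := hsub2 (Set.Ioo_subset_Icc_self hx)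
    have := hmono' h1mem hxm (le_of_lt hx.1)
    linarith [hF'1]
  intro x hx
  rcases le_total x 1 with hx1 | hx1
  · have := hanti ⟨hx.1, hx1⟩ ⟨hx.1.trans hx1 |>.trans (le_refl 1) |>.trans (le_refl 1), le_refl 1⟩ hx1
    -- F x ≥ F 1
    have h := hanti ⟨hx.1, hx1⟩ ⟨h1, le_refl 1⟩ hx1
    linarith [hF1]
  · have h := hmono ⟨hx1, hx.2⟩ ⟨hx1, hx.2⟩ (le_refl x)
    have h' := hmono ⟨le_refl 1, h1R⟩ ⟨hx1, hx.2⟩ hx1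
    linarith [hF1]

lemma g_mono (s t : ℝ) (hs : -1 ≤ s) (ht : -1 ≤ t) {a b : ℝ} (ha : 0 < a) (hab : a ≤ b) :
    a ^ (t+1) * ((a+1)/2) ^ (s-t) ≤ b ^ (t+1) * ((b+1)/2) ^ (s-t) := by
  have hb : 0 < b := lt_of_lt_of_le ha hab
  set L : ℝ → ℝ := fun x => (t+1) * Real.log x + (s-t) * Real.log ((x+1)/2) with hL
  have hrepr : ∀ x : ℝ, 0 < x → x ^ (t+1) * ((x+1)/2) ^ (s-t) = Real.exp (L x) := by
    intro x hx
    have hv : (0:ℝ) < (x+1)/2 := by linarith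
    rw [Real.rpow_def_of_pos hx, Real.rpow_def_of_pos hv, ← Real.exp_add, hL]
    ring_nf
  rw [hrepr a ha, hrepr b hb]
  apply Real.exp_le_exp.2
  have hmono : MonotoneOn L (Set.Icc a b) := by
    apply monoOn_of_hasDeriv L (fun x => (t+1) * x⁻¹ + (s-t) * (x+1)⁻¹) a b
    · intro x hx
      have hx0 : 0 < x := lt_of_lt_of_le ha hx.1
      have hv : (0:ℝ) < (x+1)/2 := by linarith
      have h1 : HasDerivAt (fun y : ℝ => Real.log y) x⁻¹ x := by
        simpa using Real.hasDerivAt_log hx0.ne'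
      have h2 : HasDerivAt (fun y : ℝ => Real.log ((y+1)/2)) ((x+1)⁻¹) x := by
        have := (hasDerivAt_half_affine x).log hv.ne'
        refine this.congr_deriv (Eq.symm ?_)
        field_simp
      exact (h1.const_mul (t+1)).add (h2.const_mul (s-t))
    · intro x hx
      have hx0 : 0 < x := lt_of_lt_of_le ha (le_of_lt hx.1)
      have hx1 : (0:ℝ) < x + 1 := by linarith
      have heq : (t+1) * x⁻¹ + (s-t) * (x+1)⁻¹ = ((t+1) + (s+1)*x) / (x*(x+1)) := by
        field_simp
        ring
      rw [heq]
      apply div_nonneg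
      · have : 0 ≤ (s+1)*x := mul_nonneg (by linarith) hx0.le
        linarith
      · positivity
  exact hmono ⟨le_refl a, hab⟩ ⟨hab, le_refl b⟩ hab

lemma psiF_one (s : ℝ) : psiF s 1 = 0 := by
  unfold psiF
  split_ifs <;> norm_num

lemma phiF_one (t : ℝ) : phiF t 1 = 0 := by
  unfold phiF
  split_ifs <;> norm_num

lemma omega_qp (n : ℕ) (s : ℝ) (p q : Fin n → ℝ)
    (hp : ∀ i, 0 < p i) (hq : ∀ i, 0 < q i) (hq1 : ∑ i, q i = 1) :
    Omega n s q p = ∑ i, q i * psiF s (p i / q i) := by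
  have hval : ∀ i, (p i / q i + 1)/2 = (q i + p i)/(2 * q i) := by
    intro i
    have hqi := (hq i).ne'
    field_simp
    ring
  by_cases h0 : s = 0
  · subst h0
    unfold Omega psiF
    rw [if_pos rfl]
    apply Finset.sum_congr rfl
    intro i _
    rw [if_pos rfl, hval i, ← Real.log_inv, inv_div]
  by_cases h1 : s = 1
  · subst h1
    unfold Omega psiF
    rw [if_neg (one_ne_zero : (1:ℝ) ≠ 0), if_pos rfl]
    apply Finset.sum_congr rfl
    intro i _
    rw [if_neg (one_ne_zero : (1:ℝ) ≠ 0), if_pos rfl, hval i]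
    have hqi := (hq i).ne'
    have e1 : q i * ((q i + p i)/(2 * q i)) = (q i + p i)/2 := by field_simp
    rw [← mul_assoc, e1]
  · unfold Omega psiF
    simp only [if_neg h0, if_neg h1]
    have he : ∀ i, q i * ((s*(s-1))⁻¹ * (((p i / q i + 1)/2) ^ s - 1))
        = (s*(s-1))⁻¹ * (q i * ((q i + p i)/(2*q i)) ^ s - q i) := by
      intro i
      rw [hval i]
      ring
    rw [Finset.sum_congr rfl (fun i _ => he i), ← Finset.mul_sum,
      Finset.sum_sub_distrib, hq1]

lemma omega_pq (n : ℕ) (t : ℝ) (p q : Fin n → ℝ)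
    (hp : ∀ i, 0 < p i) (hq : ∀ i, 0 < q i) (hq1 : ∑ i, q i = 1) :
    Omega n t p q = ∑ i, q i * phiF t (p i / q i) := by
  by_cases h0 : t = 0
  · subst h0
    unfold Omega phiF
    rw [if_pos rfl]
    apply Finset.sum_congr rfl
    intro i _
    rw [if_pos rfl]
    have hqi := (hq i).ne'
    have hpi := (hp i).ne'
    have hx : 0 < p i / q i := div_pos (hp i) (hq i)
    have e1 : q i * (p i / q i) = p i := by field_simp
    have e2 : 2 * (p i / q i) / (p i / q i + 1) = 2 * p i / (p i + q i) := by
      rw [div_eq_div_iff (by linarith : (0:ℝ) < p i / q i + 1).ne'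
        (by have := hp i; have := hq i; linarith : (0:ℝ) < p i + q i).ne']
      field_simp
    rw [← mul_assoc, e1, e2]
  by_cases h1 : t = 1
  · subst h1
    unfold Omega phiF
    rw [if_neg (one_ne_zero : (1:ℝ) ≠ 0), if_pos rfl]
    apply Finset.sum_congr rfl
    intro i _
    rw [if_neg (one_ne_zero : (1:ℝ) ≠ 0), if_pos rfl]
    have hqi := (hq i).ne'
    have hpi := (hp i).ne'
    have e1 : q i * ((p i / q i + 1)/2) = (p i + q i)/2 := by field_simp
    have hx : 0 < p i / q i := div_pos (hp i) (hq i)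
    have e2 : (p i / q i + 1) / (2 * (p i / q i)) = (p i + q i)/(2 * p i) := by
      rw [div_eq_div_iff (by linarith : (0:ℝ) < 2 * (p i / q i)).ne'
        (by have := hp i; linarith : (0:ℝ) < 2 * p i).ne']
      field_simp
    rw [← mul_assoc, e1, e2]
  · unfold Omega phiF
    simp only [if_neg h0, if_neg h1]
    have he : ∀ i, q i * ((t*(t-1))⁻¹ * ((p i / q i) ^ (1-t) * ((p i / q i + 1)/2) ^ t - 1))
        = (t*(t-1))⁻¹ * (p i * ((p i + q i)/(2*p i)) ^ t - q i) := by
      intro i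
      have hqi := hq i
      have hpi := hp i
      have hx : (0:ℝ) < p i / q i := by positivity
      have key : q i * ((p i / q i) ^ (1-t) * ((p i / q i + 1)/2) ^ t)
          = p i * ((p i + q i)/(2*p i)) ^ t := by
        have e0 : (p i / q i) ^ (1-t) = (p i / q i) * (p i / q i) ^ (-t) := by
          rw [show (1:ℝ)-t = 1 + (-t) by ring, Real.rpow_add hx, Real.rpow_one]
        have e1 : (p i / q i) ^ (-t) = (q i / p i) ^ t := by
          rw [Real.rpow_neg hx.le, ← Real.inv_rpow (le_of_lt hx), inv_div]
        have e2 : (p i / q i + 1)/2 = (p i + q i)/(2 * q i) := by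
          rw [div_eq_div_iff (two_ne_zero) (by linarith : (0:ℝ) < 2 * q i).ne']
          field_simp
        have e3 : q i / p i * ((p i + q i)/(2 * q i)) = (p i + q i)/(2 * p i) := by
          rw [div_mul_div_comm, div_eq_div_iff
            (by have := mul_pos hpi (mul_pos two_pos hqi); linarith : (0:ℝ) < p i * (2 * q i)).ne'
            (by linarith : (0:ℝ) < 2 * p i).ne']
          ring
        have e4 : q i * (p i / q i) = p i := by
          have := hqi.ne'
          field_simp
        calc q i * ((p i / q i) ^ (1-t) * ((p i / q i + 1)/2) ^ t)
            = (q i * (p i / q i)) * ((p i / q i) ^ (-t) * ((p i + q i)/(2 * q i)) ^ t) := by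
              rw [e0, e2]; ring
          _ = p i * ((q i / p i) ^ t * ((p i + q i)/(2 * q i)) ^ t) := by rw [e1, e4]
          _ = p i * (q i / p i * ((p i + q i)/(2 * q i))) ^ t := by
              rw [← Real.mul_rpow (le_of_lt (div_pos hqi hpi))
                (le_of_lt (div_pos (by linarith) (by linarith)))]
          _ = p i * ((p i + q i)/(2 * p i)) ^ t := by rw [e3]
      calc q i * ((t*(t-1))⁻¹ * ((p i / q i) ^ (1-t) * ((p i / q i + 1)/2) ^ t - 1))
          = (t*(t-1))⁻¹ * (q i * ((p i / q i) ^ (1-t) * ((p i / q i + 1)/2) ^ t) - q i) := by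
            ring
        _ = (t*(t-1))⁻¹ * (p i * ((p i + q i)/(2*p i)) ^ t - q i) := by rw [key]
    rw [Finset.sum_congr rfl (fun i _ => he i), ← Finset.mul_sum,
      Finset.sum_sub_distrib, hq1]

lemma psiDD_eq (s t x : ℝ) (hx : 0 < x) :
    psiDD s x = phiDD t x * (x ^ (t+1) * ((x+1)/2) ^ (s-t)) := by
  have hv : (0:ℝ) < (x+1)/2 := by linarith
  unfold psiDD phiDD
  have e1 : x^(-t-1) * x^(t+1) = 1 := by
    rw [← Real.rpow_add hx]; norm_num
  have e2 : ((x+1)/2)^(t-2) * ((x+1)/2)^(s-t) = ((x+1)/2)^(s-2) := by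
    rw [← Real.rpow_add hv, show t-2+(s-t) = s-2 by ring]
  calc (1/4) * ((x+1)/2)^(s-2)
      = (1/4) * (x^(-t-1) * x^(t+1)) * (((x+1)/2)^(t-2) * ((x+1)/2)^(s-t)) := by
        rw [e1, e2]; ring
    _ = (1/4) * x^(-t-1) * ((x+1)/2)^(t-2) * (x^(t+1) * ((x+1)/2)^(s-t)) := by ring

lemma phiDD_pos (t x : ℝ) (hx : 0 < x) : 0 < phiDD t x := by
  have hv : (0:ℝ) < (x+1)/2 := by linarith
  unfold phiDD
  have h1 := Real.rpow_pos_of_pos hx (-t-1)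
  have h2 := Real.rpow_pos_of_pos hv (t-2)
  positivity

lemma main_half (s t : ℝ) (a b : ℝ)
    (n : ℕ) (p q : Fin n → ℝ)
    (hp : ∀ i, 0 < p i) (hq : ∀ i, 0 < q i)
    (hp1 : ∑ i, p i = 1) (hq1 : ∑ i, q i = 1)
    (r R : ℝ) (hr : 0 < r) (h1r : r ≤ 1) (h1R : 1 ≤ R)
    (hbound : ∀ i, r ≤ p i / q i ∧ p i / q i ≤ R)
    (hcvx : ∀ x ∈ Set.Icc r R, 0 ≤ a * psiDD s x + b * phiDD t x) :
    0 ≤ a * Omega n s q p + b * Omega n t p q := by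
  set c : ℝ := a * psiD s 1 + b * phiD t 1 with hc
  set F : ℝ → ℝ := fun x => a * psiF s x + b * phiF t x - c * (x - 1) with hF
  have hpos0 : ∀ x ∈ Set.Icc r R, (0:ℝ) < x := fun x hx => lt_of_lt_of_le hr hx.1
  have hd : ∀ x ∈ Set.Icc r R, HasDerivAt F (a * psiD s x + b * phiD t x - c) x := by
    intro x hx
    have h := ((hasDerivAt_psiF s x (hpos0 x hx)).const_mul a).add
      ((hasDerivAt_phiF t x (hpos0 x hx)).const_mul b)
    have h2 : HasDerivAt (fun y : ℝ => c * (y - 1)) c x := by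
      simpa using ((hasDerivAt_id x).sub_const 1).const_mul c
    exact h.sub h2
  have hd2 : ∀ x ∈ Set.Icc r R,
      HasDerivAt (fun x => a * psiD s x + b * phiD t x - c)
        (a * psiDD s x + b * phiDD t x) x := by
    intro x hx
    have h := ((hasDerivAt_psiD s x (hpos0 x hx)).const_mul a).add
      ((hasDerivAt_phiD t x (hpos0 x hx)).const_mul b)
    simpa using h.sub_const c
  have hF1 : F 1 = 0 := by simp [hF, psiF_one, phiF_one]
  have hF'1 : a * psiD s 1 + b * phiD t 1 - c = 0 := by rw [hc]; ring
  have hkey := key_nonneg F (fun x => a * psiD s x + b * phiD t x - c)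
    (fun x => a * psiDD s x + b * phiDD t x) r R h1r h1R hd hd2 hF1 hF'1 hcvx
  have hterm : ∀ i, 0 ≤ q i * F (p i / q i) := by
    intro i
    exact mul_nonneg (hq i).le (hkey _ ⟨(hbound i).1, (hbound i).2⟩)
  have hsum : 0 ≤ ∑ i, q i * F (p i / q i) := Finset.sum_nonneg fun i _ => hterm i
  have hexp : ∑ i, q i * F (p i / q i)
      = a * (∑ i, q i * psiF s (p i / q i)) + b * (∑ i, q i * phiF t (p i / q i))
        - c * (∑ i, (p i - q i)) := by
    rw [Finset.mul_sum, Finset.mul_sum, Finset.mul_sum, ← Finset.sum_add_distrib,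
      ← Finset.sum_sub_distrib]
    apply Finset.sum_congr rfl
    intro i _
    have hqi := (hq i).ne'
    have e : q i * (p i / q i - 1) = p i - q i := by field_simp
    simp only [hF]
    linear_combination (-c) * e
  rw [hexp, Finset.sum_sub_distrib, hp1, hq1, sub_self, mul_zero, sub_zero] at hsum
  rwa [omega_qp n s p q hp hq hq1, omega_pq n t p q hp hq hq1]

theorem stmt_11 (s t : ℝ) (hs : -1 ≤ s) (ht : -1 ≤ t)
    (n : ℕ) (hn : 2 ≤ n) (p q : Fin n → ℝ)
    (hp : ∀ i, 0 < p i) (hq : ∀ i, 0 < q i)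
    (hp1 : ∑ i, p i = 1) (hq1 : ∑ i, q i = 1)
    (r R : ℝ) (hr : 0 < r) (hrR : r ≤ R)
    (hbound : ∀ i, r ≤ p i / q i ∧ p i / q i ≤ R) :
    r ^ (t + 1) * ((r + 1) / 2) ^ (s - t) * Omega n t p q ≤ Omega n s q p ∧
      Omega n s q p ≤ R ^ (t + 1) * ((R + 1) / 2) ^ (s - t) * Omega n t p q := by
  have h1R : (1:ℝ) ≤ R := by
    have hle : ∀ i, p i ≤ q i * R := by
      intro i
      have h := (hbound i).2
      rw [div_le_iff₀ (hq i)] at h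
      linarith
    have := Finset.sum_le_sum (fun i (_ : i ∈ Finset.univ) => hle i)
    rw [hp1, ← Finset.sum_mul, hq1, one_mul] at this
    exact this
  have h1r : r ≤ 1 := by
    have hle : ∀ i, q i * r ≤ p i := by
      intro i
      have h := (hbound i).1
      rw [le_div_iff₀ (hq i)] at h
      linarith
    have := Finset.sum_le_sum (fun i (_ : i ∈ Finset.univ) => hle i)
    rw [hp1, ← Finset.sum_mul, hq1, one_mul] at this
    exact this
  constructor
  · have hcvx : ∀ x ∈ Set.Icc r R,
        0 ≤ 1 * psiDD s x + (-(r ^ (t+1) * ((r+1)/2) ^ (s-t))) * phiDD t x := by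
      intro x hx
      have hx0 : 0 < x := lt_of_lt_of_le hr hx.1
      have hg := g_mono s t hs ht hr hx.1
      have heq : 1 * psiDD s x + (-(r ^ (t+1) * ((r+1)/2) ^ (s-t))) * phiDD t x
          = phiDD t x * (x ^ (t+1) * ((x+1)/2) ^ (s-t) - r ^ (t+1) * ((r+1)/2) ^ (s-t)) := by
        rw [psiDD_eq s t x hx0]; ring
      rw [heq]
      exact mul_nonneg (phiDD_pos t x hx0).le (sub_nonneg.2 hg)
    have := main_half s t 1 (-(r ^ (t+1) * ((r+1)/2) ^ (s-t))) n p q hp hq hp1 hq1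
      r R hr h1r h1R hbound hcvx
    linarith
  · have hcvx : ∀ x ∈ Set.Icc r R,
        0 ≤ (-1) * psiDD s x + (R ^ (t+1) * ((R+1)/2) ^ (s-t)) * phiDD t x := by
      intro x hx
      have hx0 : 0 < x := lt_of_lt_of_le hr hx.1
      have hg := g_mono s t hs ht hx0 hx.2
      have heq : (-1) * psiDD s x + (R ^ (t+1) * ((R+1)/2) ^ (s-t)) * phiDD t x
          = phiDD t x * (R ^ (t+1) * ((R+1)/2) ^ (s-t) - x ^ (t+1) * ((x+1)/2) ^ (s-t)) := by
        rw [psiDD_eq s t x hx0]; ring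
      rw [heq]
      exact mul_nonneg (phiDD_pos t x hx0).le (sub_nonneg.2 hg)
    have := main_half s t (-1) (R ^ (t+1) * ((R+1)/2) ^ (s-t)) n p q hp hq hp1 hq1
      r R hr h1r h1R hbound hcvx
    linarith
end

section
/- Let s, t ∈ ℝ with s ≤ −1 and t ≤ −1. Then for all P, Q ∈ Γ_n with r ≤ p_i/q_i ≤ R for all i: R^{t+1} ((R+1)/2)^{s−t} Ω_t(P||Q) ≤ Ω_s(Q||P) ≤ r^{t+1} ((r+1)/2)^{s−t} Ω_t(P||Q). -/
open Real Finset

private lemma hw_pos {x : ℝ} (hx : 0 < x) : 0 < (x + 1) / 2 := by linarith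

private lemma hasDerivAt_half (x : ℝ) : HasDerivAt (fun x : ℝ => (x + 1) / 2) (1 / 2) x := by
  simpa using ((hasDerivAt_id x).add_const 1).div_const 2

private lemma hasDerivAt_A (u : ℝ) {x : ℝ} (hx : 0 < x) :
    HasDerivAt (fun x : ℝ => ((x + 1) / 2) ^ u) (u * ((x + 1) / 2) ^ (u - 1) / 2) x := by
  have h := (hasDerivAt_half x).rpow_const (p := u) (Or.inl (hw_pos hx).ne')
  convert h using 1; ring

private lemma hasDerivAt_B (v : ℝ) {x : ℝ} (hx : 0 < x) :
    HasDerivAt (fun x : ℝ => x ^ (1 - v) * ((x + 1) / 2) ^ v - x)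
      ((1 - v) * x ^ (-v) * ((x + 1) / 2) ^ v
        + x ^ (1 - v) * (v * ((x + 1) / 2) ^ (v - 1) / 2) - 1) x := by
  have h1 : HasDerivAt (fun x : ℝ => x ^ (1 - v)) ((1 - v) * x ^ (-v)) x := by
    have := Real.hasDerivAt_rpow_const (x := x) (p := 1 - v) (Or.inl hx.ne')
    simpa [show 1 - v - 1 = -v by ring] using this
  have h2 := hasDerivAt_A v hx
  have h := (h1.mul h2).sub (hasDerivAt_id x)
  exact h

private lemma rpow_shift1 {x : ℝ} (hx : 0 < x) (v : ℝ) : x ^ (-v) = x ^ (-v - 1) * x := by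
  calc x ^ (-v) = x ^ (-v - 1 + 1) := by congr 1; ring
    _ = x ^ (-v - 1) * x := Real.rpow_add_one hx.ne' _

private lemma rpow_shift2 {x : ℝ} (hx : 0 < x) (v : ℝ) :
    x ^ (1 - v) = x ^ (-v - 1) * x ^ 2 := by
  calc x ^ (1 - v) = x ^ (-v - 1 + 2) := by congr 1; ring
    _ = x ^ (-v - 1) * x ^ (2:ℝ) := Real.rpow_add hx _ _
    _ = x ^ (-v - 1) * x ^ 2 := by
        rw [show (2:ℝ) = ((2:ℕ):ℝ) by norm_num, Real.rpow_natCast]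

private lemma hasDerivAt_A' (u : ℝ) {x : ℝ} (hx : 0 < x) :
    HasDerivAt (fun x : ℝ => u * ((x + 1) / 2) ^ (u - 1) / 2)
      (u * (u - 1) * ((x + 1) / 2) ^ (u - 2) / 4) x := by
  have h := (((hasDerivAt_A (u - 1) hx).const_mul u).div_const 2)
  refine h.congr_deriv ?_
  rw [show u - 1 - 1 = u - 2 by ring]; ring

private lemma hasDerivAt_B' (v : ℝ) {x : ℝ} (hx : 0 < x) :
    HasDerivAt (fun x : ℝ => (1 - v) * x ^ (-v) * ((x + 1) / 2) ^ v
        + x ^ (1 - v) * (v * ((x + 1) / 2) ^ (v - 1) / 2) - 1)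
      (v * (v - 1) * (x ^ (-v - 1) * ((x + 1) / 2) ^ (v - 2)) / 4) x := by
  have hw := hw_pos hx
  have hxv : HasDerivAt (fun x : ℝ => x ^ (-v)) (-v * x ^ (-v - 1)) x :=
    Real.hasDerivAt_rpow_const (Or.inl hx.ne')
  have hx1v : HasDerivAt (fun x : ℝ => x ^ (1 - v)) ((1 - v) * x ^ (-v)) x := by
    have := Real.hasDerivAt_rpow_const (x := x) (p := 1 - v) (Or.inl hx.ne')
    simpa [show 1 - v - 1 = -v by ring] using this
  have h1 : HasDerivAt (fun x : ℝ => (1 - v) * x ^ (-v) * ((x + 1) / 2) ^ v)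
      (((1 - v) * (-v * x ^ (-v - 1))) * ((x + 1) / 2) ^ v
        + ((1 - v) * x ^ (-v)) * (v * ((x + 1) / 2) ^ (v - 1) / 2)) x := by
    have := (hxv.const_mul (1 - v)).mul (hasDerivAt_A v hx)
    refine this.congr_deriv ?_; ring
  have h2 : HasDerivAt (fun x : ℝ => x ^ (1 - v) * (v * ((x + 1) / 2) ^ (v - 1) / 2))
      (((1 - v) * x ^ (-v)) * (v * ((x + 1) / 2) ^ (v - 1) / 2)
        + x ^ (1 - v) * (v * (v - 1) * ((x + 1) / 2) ^ (v - 2) / 4)) x :=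
    hx1v.mul (hasDerivAt_A' v hx)
  have h := (h1.add h2).sub_const 1
  refine h.congr_deriv ?_
  rw [rpow_shift1 hx v, rpow_shift2 hx v,
    show (x + 1) / 2 = (x + 1) / 2 from rfl]
  have hwv : ((x + 1) / 2 : ℝ) ^ v = ((x + 1) / 2) ^ (v - 2) * ((x + 1) / 2) ^ 2 := by
    calc ((x + 1) / 2 : ℝ) ^ v = ((x + 1) / 2) ^ (v - 2 + 2) := by congr 1; ring
      _ = ((x + 1) / 2) ^ (v - 2) * ((x + 1) / 2) ^ (2:ℝ) := Real.rpow_add hw _ _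
      _ = ((x + 1) / 2) ^ (v - 2) * ((x + 1) / 2) ^ 2 := by
          rw [show (2:ℝ) = ((2:ℕ):ℝ) by norm_num, Real.rpow_natCast]
  have hwv1 : ((x + 1) / 2 : ℝ) ^ (v - 1) = ((x + 1) / 2) ^ (v - 2) * ((x + 1) / 2) := by
    calc ((x + 1) / 2 : ℝ) ^ (v - 1) = ((x + 1) / 2) ^ (v - 2 + 1) := by congr 1; ring
      _ = ((x + 1) / 2) ^ (v - 2) * ((x + 1) / 2) := Real.rpow_add_one hw.ne' _
  rw [hwv, hwv1]; ring

private lemma convexAB (u v a b e r R : ℝ) (hr : 0 < r)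
    (hcond : ∀ x ∈ Set.Icc r R, 0 ≤ a * (u * (u - 1) * ((x + 1) / 2) ^ (u - 2))
      + b * (v * (v - 1) * (x ^ (-v - 1) * ((x + 1) / 2) ^ (v - 2)))) :
    ConvexOn ℝ (Set.Icc r R)
      (fun x => a * ((x + 1) / 2) ^ u + b * (x ^ (1 - v) * ((x + 1) / 2) ^ v - x) + e) := by
  set f : ℝ → ℝ :=
    fun x => a * ((x + 1) / 2) ^ u + b * (x ^ (1 - v) * ((x + 1) / 2) ^ v - x) + e with hf_def
  set K : ℝ → ℝ := fun x => a * (u * ((x + 1) / 2) ^ (u - 1) / 2)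
      + b * ((1 - v) * x ^ (-v) * ((x + 1) / 2) ^ v
        + x ^ (1 - v) * (v * ((x + 1) / 2) ^ (v - 1) / 2) - 1) with hK_def
  have hf : ∀ x ∈ Set.Ioi (0 : ℝ), HasDerivAt f (K x) x := by
    intro x hx
    exact (((hasDerivAt_A u hx).const_mul a).add ((hasDerivAt_B v hx).const_mul b)).add_const e
  have hK : ∀ x ∈ Set.Ioi (0 : ℝ), HasDerivAt K
      (a * (u * (u - 1) * ((x + 1) / 2) ^ (u - 2) / 4)
        + b * (v * (v - 1) * (x ^ (-v - 1) * ((x + 1) / 2) ^ (v - 2)) / 4)) x := by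
    intro x hx
    exact ((hasDerivAt_A' u hx).const_mul a).add ((hasDerivAt_B' v hx).const_mul b)
  have hsub : Set.Icc r R ⊆ Set.Ioi (0 : ℝ) := fun x hx => lt_of_lt_of_le hr hx.1
  have hsub' : interior (Set.Icc r R) ⊆ Set.Ioi (0 : ℝ) := interior_subset.trans hsub
  have hderiv : ∀ x ∈ Set.Ioi (0 : ℝ), deriv f x = K x := fun x hx => (hf x hx).deriv
  apply convexOn_of_deriv2_nonneg (convex_Icc r R)
  · exact fun x hx => ((hf x (hsub hx)).differentiableAt.continuousAt).continuousWithinAt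
  · exact fun x hx => (hf x (hsub' hx)).differentiableAt.differentiableWithinAt
  · intro x hx
    have hev : deriv f =ᶠ[nhds x] K :=
      Filter.eventuallyEq_of_mem (isOpen_Ioi.mem_nhds (hsub' hx)) hderiv
    exact (hev.differentiableAt_iff.mpr (hK x (hsub' hx)).differentiableAt).differentiableWithinAt
  · intro x hx
    have hev : deriv f =ᶠ[nhds x] K :=
      Filter.eventuallyEq_of_mem (isOpen_Ioi.mem_nhds (hsub' hx)) hderiv
    have h2 : deriv (deriv f) x = a * (u * (u - 1) * ((x + 1) / 2) ^ (u - 2) / 4)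
        + b * (v * (v - 1) * (x ^ (-v - 1) * ((x + 1) / 2) ^ (v - 2)) / 4) := by
      rw [hev.deriv_eq]; exact (hK x (hsub' hx)).deriv
    have hx' : x ∈ Set.Icc r R := interior_subset hx
    have := hcond x hx'
    simp only [Function.iterate_succ, Function.iterate_zero, Function.comp_apply, id_eq]
    rw [h2]; linarith

private lemma phi_anti {s t : ℝ} (hs : s ≤ -1) (ht : t ≤ -1) {x y : ℝ}
    (hx : 0 < x) (hxy : x ≤ y) :
    y ^ (t + 1) * ((y + 1) / 2) ^ (s - t) ≤ x ^ (t + 1) * ((x + 1) / 2) ^ (s - t) := by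
  have hy : 0 < y := lt_of_lt_of_le hx hxy
  have hwx : (0:ℝ) < (x + 1) / 2 := hw_pos hx
  have hwy : (0:ℝ) < (y + 1) / 2 := hw_pos hy
  have key : ∀ z : ℝ, 0 < z →
      z ^ (t + 1) * ((z + 1) / 2) ^ (s - t)
        = ((z + 1) / 2) ^ (s + 1) * (z / ((z + 1) / 2)) ^ (t + 1) := by
    intro z hz
    have hw : (0:ℝ) < (z + 1) / 2 := hw_pos hz
    rw [Real.div_rpow hz.le hw.le, show s - t = (s + 1) - (t + 1) by ring, Real.rpow_sub hw]
    field_simp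
  rw [key x hx, key y hy]
  have f1 : ((y + 1) / 2 : ℝ) ^ (s + 1) ≤ ((x + 1) / 2) ^ (s + 1) :=
    Real.rpow_le_rpow_of_nonpos hwx (by linarith) (by linarith)
  have hdiv : x / ((x + 1) / 2) ≤ y / ((y + 1) / 2) := by
    rw [div_le_div_iff₀ hwx hwy]; nlinarith
  have f2 : (y / ((y + 1) / 2)) ^ (t + 1) ≤ (x / ((x + 1) / 2)) ^ (t + 1) :=
    Real.rpow_le_rpow_of_nonpos (div_pos hx hwx) hdiv (by linarith)
  exact mul_le_mul f1 f2 (Real.rpow_pos_of_pos (div_pos hy hwy) _).le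
    (Real.rpow_pos_of_pos hwx _).le

theorem stmt_12 (s t : ℝ) (hs : s ≤ -1) (ht : t ≤ -1)
    (n : ℕ) (hn : 2 ≤ n) (p q : Fin n → ℝ)
    (hp : ∀ i, 0 < p i) (hq : ∀ i, 0 < q i)
    (hp1 : ∑ i, p i = 1) (hq1 : ∑ i, q i = 1)
    (r R : ℝ) (hr : 0 < r) (hrR : r ≤ R)
    (hbound : ∀ i, r ≤ p i / q i ∧ p i / q i ≤ R) :
    R ^ (t + 1) * ((R + 1) / 2) ^ (s - t) * Omega n t p q ≤ Omega n s q p ∧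
      Omega n s q p ≤ r ^ (t + 1) * ((r + 1) / 2) ^ (s - t) * Omega n t p q := by
  have hs0 : s ≠ 0 := by linarith
  have hs1 : s ≠ 1 := by linarith
  have ht0 : t ≠ 0 := by linarith
  have ht1 : t ≠ 1 := by linarith
  have hR : 0 < R := lt_of_lt_of_le hr hrR
  have hss : 0 < s * (s - 1) := mul_pos_of_neg_of_neg (by linarith) (by linarith)
  have htt : 0 < t * (t - 1) := mul_pos_of_neg_of_neg (by linarith) (by linarith)
  set cs : ℝ := (s * (s - 1))⁻¹ with hcs_def
  set ct : ℝ := (t * (t - 1))⁻¹ with hct_def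
  have hcs : cs * (s * (s - 1)) = 1 := inv_mul_cancel₀ hss.ne'
  have hct : ct * (t * (t - 1)) = 1 := inv_mul_cancel₀ htt.ne'
  set X : Fin n → ℝ := fun i => p i / q i with hX_def
  have hXpos : ∀ i, 0 < X i := fun i => div_pos (hp i) (hq i)
  have hmem : ∀ i, X i ∈ Set.Icc r R := fun i => ⟨(hbound i).1, (hbound i).2⟩
  set m : ℝ := R ^ (t + 1) * ((R + 1) / 2) ^ (s - t) with hm_def
  set M : ℝ := r ^ (t + 1) * ((r + 1) / 2) ^ (s - t) with hM_def
  set S1 : ℝ := ∑ i, q i * ((X i + 1) / 2) ^ s with hS1_def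
  set S2 : ℝ := ∑ i, q i * ((X i) ^ (1 - t) * ((X i + 1) / 2) ^ t - X i) with hS2_def
  -- Omega identities
  have hOs : Omega n s q p = cs * (S1 - 1) := by
    rw [Omega, if_neg hs0, if_neg hs1, hS1_def]
    congr 2
    apply Finset.sum_congr rfl
    intro i _
    have hqi := (hq i).ne'
    have ebase : ((q i + p i) / (2 * q i)) = (X i + 1) / 2 := by
      show (q i + p i) / (2 * q i) = (p i / q i + 1) / 2
      rw [div_add' _ _ _ hqi, one_mul, div_div, mul_comm (q i) 2, add_comm]
    rw [ebase]
  have key_i : ∀ i, q i * ((X i) ^ (1 - t) * ((X i + 1) / 2) ^ t - X i)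
      = p i * ((p i + q i) / (2 * p i)) ^ t - p i := by
    intro i
    have hqi := hq i
    have hpi := hp i
    have hx : 0 < X i := hXpos i
    have hwx : 0 < (X i + 1) / 2 := hw_pos hx
    have e4 : q i * X i = p i := by rw [hX_def]; field_simp
    have e1 : ((X i + 1) / 2) / X i = (p i + q i) / (2 * p i) := by
      rw [hX_def]; field_simp
    calc q i * ((X i) ^ (1 - t) * ((X i + 1) / 2) ^ t - X i)
        = (q i * X i) * (((X i + 1) / 2) ^ t / (X i) ^ t) - q i * X i := by
          rw [Real.rpow_sub hx, Real.rpow_one]; ring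
      _ = p i * (((X i + 1) / 2) / X i) ^ t - p i := by
          rw [Real.div_rpow hwx.le hx.le, e4]
      _ = p i * ((p i + q i) / (2 * p i)) ^ t - p i := by rw [e1]
  have hOt : Omega n t p q = ct * S2 := by
    rw [Omega, if_neg ht0, if_neg ht1]
    have hS2' : S2 = (∑ i, p i * ((p i + q i) / (2 * p i)) ^ t) - 1 := by
      rw [hS2_def, Finset.sum_congr rfl fun i _ => key_i i, Finset.sum_sub_distrib, hp1]
    rw [hS2']
  -- the weighted sum of points is 1
  have hsum1 : ∑ i, q i • X i = 1 := by
    have hterm : ∀ i, q i • X i = p i := fun i => by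
      rw [smul_eq_mul, hX_def, mul_comm, div_mul_cancel₀ _ (hq i).ne']
    rw [Finset.sum_congr rfl fun i _ => hterm i, hp1]
  -- generic Jensen consequence
  have jensen : ∀ a b e : ℝ,
      ConvexOn ℝ (Set.Icc r R)
        (fun x => a * ((x + 1) / 2) ^ s + b * (x ^ (1 - t) * ((x + 1) / 2) ^ t - x) + e) →
      a + e ≤ a * S1 + b * S2 + e := by
    intro a b e hconv
    have hj := hconv.map_sum_le (fun i _ => (hq i).le) hq1 (fun i _ => hmem i)
    rw [hsum1] at hj
    have hf1 : a * (((1:ℝ) + 1) / 2) ^ s + b * ((1:ℝ) ^ (1 - t) * (((1:ℝ) + 1) / 2) ^ t - 1) + e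
        = a + e := by norm_num
    have hrhs : ∑ i, q i • (a * ((X i + 1) / 2) ^ s
          + b * ((X i) ^ (1 - t) * ((X i + 1) / 2) ^ t - X i) + e)
        = a * S1 + b * S2 + e := by
      have hterm : ∀ i, q i • (a * ((X i + 1) / 2) ^ s
            + b * ((X i) ^ (1 - t) * ((X i + 1) / 2) ^ t - X i) + e)
          = a * (q i * ((X i + 1) / 2) ^ s)
            + b * (q i * ((X i) ^ (1 - t) * ((X i + 1) / 2) ^ t - X i)) + e * q i := by
        intro i; rw [smul_eq_mul]; ring
      rw [Finset.sum_congr rfl fun i _ => hterm i, Finset.sum_add_distrib,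
        Finset.sum_add_distrib, ← Finset.mul_sum, ← Finset.mul_sum, ← Finset.mul_sum,
        hq1, hS1_def, hS2_def]
      ring
    simp only [smul_eq_mul] at hj hrhs
    rw [hf1] at hj
    calc a + e ≤ ∑ i, q i * (a * ((X i + 1) / 2) ^ s
          + b * ((X i) ^ (1 - t) * ((X i + 1) / 2) ^ t - X i) + e) := hj
      _ = a * S1 + b * S2 + e := hrhs
  -- key product identity
  have hid : ∀ x : ℝ, 0 < x →
      (x ^ (t + 1) * ((x + 1) / 2) ^ (s - t)) * (x ^ (-t - 1) * ((x + 1) / 2) ^ (t - 2))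
        = ((x + 1) / 2) ^ (s - 2) := by
    intro x hx
    have hw : (0:ℝ) < (x + 1) / 2 := hw_pos hx
    have a1 : x ^ (t + 1) * x ^ (-t - 1) = 1 := by
      rw [← Real.rpow_add hx, show t + 1 + (-t - 1) = 0 by ring, Real.rpow_zero]
    have a2 : ((x + 1) / 2 : ℝ) ^ (s - t) * ((x + 1) / 2) ^ (t - 2)
        = ((x + 1) / 2) ^ (s - 2) := by
      rw [← Real.rpow_add hw]; congr 1; ring
    calc (x ^ (t + 1) * ((x + 1) / 2) ^ (s - t)) * (x ^ (-t - 1) * ((x + 1) / 2) ^ (t - 2))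
        = (x ^ (t + 1) * x ^ (-t - 1))
            * (((x + 1) / 2) ^ (s - t) * ((x + 1) / 2) ^ (t - 2)) := by ring
      _ = ((x + 1) / 2) ^ (s - 2) := by rw [a1, a2, one_mul]
  constructor
  · -- left inequality
    have hconv : ConvexOn ℝ (Set.Icc r R)
        (fun x => cs * ((x + 1) / 2) ^ s
          + (-(m * ct)) * (x ^ (1 - t) * ((x + 1) / 2) ^ t - x) + (-cs)) := by
      apply convexAB s t cs (-(m * ct)) (-cs) r R hr
      intro x hx
      have hx0 : 0 < x := lt_of_lt_of_le hr hx.1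
      have hw : (0:ℝ) < (x + 1) / 2 := hw_pos hx0
      have hE : 0 < x ^ (-t - 1) * ((x + 1) / 2) ^ (t - 2) :=
        mul_pos (Real.rpow_pos_of_pos hx0 _) (Real.rpow_pos_of_pos hw _)
      have hphi : m ≤ x ^ (t + 1) * ((x + 1) / 2) ^ (s - t) := by
        rw [hm_def]; exact phi_anti hs ht hx0 hx.2
      have hmul : m * (x ^ (-t - 1) * ((x + 1) / 2) ^ (t - 2))
          ≤ ((x + 1) / 2) ^ (s - 2) := by
        calc m * (x ^ (-t - 1) * ((x + 1) / 2) ^ (t - 2))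
            ≤ (x ^ (t + 1) * ((x + 1) / 2) ^ (s - t))
                * (x ^ (-t - 1) * ((x + 1) / 2) ^ (t - 2)) :=
              mul_le_mul_of_nonneg_right hphi hE.le
          _ = ((x + 1) / 2) ^ (s - 2) := hid x hx0
      have eA : cs * (s * (s - 1) * ((x + 1) / 2) ^ (s - 2)) = ((x + 1) / 2) ^ (s - 2) := by
        calc cs * (s * (s - 1) * ((x + 1) / 2) ^ (s - 2))
            = (cs * (s * (s - 1))) * ((x + 1) / 2) ^ (s - 2) := by ring
          _ = ((x + 1) / 2) ^ (s - 2) := by rw [hcs, one_mul]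
      have eB : (-(m * ct)) * (t * (t - 1) * (x ^ (-t - 1) * ((x + 1) / 2) ^ (t - 2)))
          = -(m * (x ^ (-t - 1) * ((x + 1) / 2) ^ (t - 2))) := by
        calc (-(m * ct)) * (t * (t - 1) * (x ^ (-t - 1) * ((x + 1) / 2) ^ (t - 2)))
            = -(m * ((ct * (t * (t - 1)))
                * (x ^ (-t - 1) * ((x + 1) / 2) ^ (t - 2)))) := by ring
          _ = _ := by rw [hct, one_mul]
      rw [eA, eB]
      linarith
    have hj := jensen cs (-(m * ct)) (-cs) hconv
    rw [hOs, hOt]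
    nlinarith [hj]
  · -- right inequality
    have hconv : ConvexOn ℝ (Set.Icc r R)
        (fun x => (-cs) * ((x + 1) / 2) ^ s
          + (M * ct) * (x ^ (1 - t) * ((x + 1) / 2) ^ t - x) + cs) := by
      apply convexAB s t (-cs) (M * ct) cs r R hr
      intro x hx
      have hx0 : 0 < x := lt_of_lt_of_le hr hx.1
      have hw : (0:ℝ) < (x + 1) / 2 := hw_pos hx0
      have hE : 0 < x ^ (-t - 1) * ((x + 1) / 2) ^ (t - 2) :=
        mul_pos (Real.rpow_pos_of_pos hx0 _) (Real.rpow_pos_of_pos hw _)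
      have hphi : x ^ (t + 1) * ((x + 1) / 2) ^ (s - t) ≤ M := by
        rw [hM_def]; exact phi_anti hs ht hr hx.1
      have hmul : ((x + 1) / 2) ^ (s - 2)
          ≤ M * (x ^ (-t - 1) * ((x + 1) / 2) ^ (t - 2)) := by
        calc ((x + 1) / 2) ^ (s - 2)
            = (x ^ (t + 1) * ((x + 1) / 2) ^ (s - t))
                * (x ^ (-t - 1) * ((x + 1) / 2) ^ (t - 2)) := (hid x hx0).symm
          _ ≤ M * (x ^ (-t - 1) * ((x + 1) / 2) ^ (t - 2)) :=
              mul_le_mul_of_nonneg_right hphi hE.le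
      have eA : (-cs) * (s * (s - 1) * ((x + 1) / 2) ^ (s - 2))
          = -(((x + 1) / 2) ^ (s - 2)) := by
        calc (-cs) * (s * (s - 1) * ((x + 1) / 2) ^ (s - 2))
            = -((cs * (s * (s - 1))) * ((x + 1) / 2) ^ (s - 2)) := by ring
          _ = _ := by rw [hcs, one_mul]
      have eB : (M * ct) * (t * (t - 1) * (x ^ (-t - 1) * ((x + 1) / 2) ^ (t - 2)))
          = M * (x ^ (-t - 1) * ((x + 1) / 2) ^ (t - 2)) := by
        calc (M * ct) * (t * (t - 1) * (x ^ (-t - 1) * ((x + 1) / 2) ^ (t - 2)))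
            = M * ((ct * (t * (t - 1))) * (x ^ (-t - 1) * ((x + 1) / 2) ^ (t - 2))) := by ring
          _ = _ := by rw [hct, one_mul]
      rw [eA, eB]
      linarith
    have hj := jensen (-cs) (M * ct) cs hconv
    rw [hOs, hOt]
    nlinarith [hj]
end

section
/- Let s, t ∈ ℝ with 0 ≤ s ≤ 4 and t ≥ −1. Then for all P, Q ∈ Γ_n with r ≤ p_i/q_i ≤ R for all i: r^{t+1} ((r+1)/2)^{s−t−1} (sr + 4 − s) Ω_t(P||Q) ≤ ζ_s(P||Q) ≤ R^{t+1} ((R+1)/2)^{s−t−1} (sR + 4 − s) Ω_t(P||Q). -/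
open Real Finset

namespace Stmt13Aux


/-- If `F 1 = 0`, `F' 1 = 0` and `F'' ≥ 0` on `[r,R] ∋ 1`, then `F ≥ 0` on `[r,R]`. -/
lemma nonneg_of_convex {r R : ℝ} (hr : 0 < r) (hr1 : r ≤ 1) (h1R : 1 ≤ R)
    (F F' F'' : ℝ → ℝ)
    (hF : ∀ x ∈ Set.Ioi (0:ℝ), HasDerivAt F (F' x) x)
    (hF' : ∀ x ∈ Set.Ioi (0:ℝ), HasDerivAt F' (F'' x) x)
    (hF1 : F 1 = 0) (hF'1 : F' 1 = 0)
    (hF''0 : ∀ x ∈ Set.Icc r R, 0 ≤ F'' x) :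
    ∀ x ∈ Set.Icc r R, 0 ≤ F x := by
  have hsub : Set.Icc r R ⊆ Set.Ioi (0:ℝ) := fun x hx => lt_of_lt_of_le hr hx.1
  have hmem1 : (1:ℝ) ∈ Set.Icc r R := ⟨hr1, h1R⟩
  have hF'mono : MonotoneOn F' (Set.Icc r R) := by
    apply monotoneOn_of_deriv_nonneg (convex_Icc r R)
    · exact fun x hx => ((hF' x (hsub hx)).continuousAt).continuousWithinAt
    · intro x hx
      exact ((hF' x (hsub (interior_subset hx))).differentiableAt).differentiableWithinAt
    · intro x hx
      rw [(hF' x (hsub (interior_subset hx))).deriv]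
      exact hF''0 x (interior_subset hx)
  intro x hx
  rcases le_total 1 x with h1x | hx1
  · -- F monotone on [1, x]
    have hmono : MonotoneOn F (Set.Icc 1 R) := by
      apply monotoneOn_of_deriv_nonneg (convex_Icc 1 R)
      · intro y hy
        exact ((hF y (hsub ⟨le_trans hr1 hy.1, hy.2⟩)).continuousAt).continuousWithinAt
      · intro y hy
        have hy' := interior_subset hy
        exact ((hF y (hsub ⟨le_trans hr1 hy'.1, hy'.2⟩)).differentiableAt).differentiableWithinAt
      · intro y hy
        have hy' := interior_subset hy
        have hmem : y ∈ Set.Icc r R := ⟨le_trans hr1 hy'.1, hy'.2⟩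
        rw [(hF y (hsub hmem)).deriv]
        calc (0:ℝ) = F' 1 := hF'1.symm
          _ ≤ F' y := hF'mono hmem1 hmem hy'.1
    have := hmono ⟨le_refl 1, h1R⟩ ⟨h1x, hx.2⟩ h1x
    simpa [hF1] using this
  · have hmono : AntitoneOn F (Set.Icc r 1) := by
      apply antitoneOn_of_deriv_nonpos (convex_Icc r 1)
      · intro y hy
        exact ((hF y (hsub ⟨hy.1, le_trans hy.2 h1R⟩)).continuousAt).continuousWithinAt
      · intro y hy
        have hy' := interior_subset hy
        exact ((hF y (hsub ⟨hy'.1, le_trans hy'.2 h1R⟩)).differentiableAt).differentiableWithinAt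
      · intro y hy
        have hy' := interior_subset hy
        have hmem : y ∈ Set.Icc r R := ⟨hy'.1, le_trans hy'.2 h1R⟩
        rw [(hF y (hsub hmem)).deriv]
        calc F' y ≤ F' 1 := hF'mono hmem hmem1 hy'.2
          _ = 0 := hF'1
    have := hmono ⟨hx.1, hx1⟩ ⟨hr1, le_refl 1⟩ hx1
    simpa [hF1] using this



noncomputable def f (s x : ℝ) : ℝ :=
  if s = 1 then (x - 1) * Real.log ((x + 1) / 2)
  else (s - 1)⁻¹ * ((x - 1) * ((x + 1) / 2) ^ (s - 1))

noncomputable def f1 (s x : ℝ) : ℝ :=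
  if s = 1 then Real.log ((x + 1) / 2) + (x - 1) / (x + 1)
  else (s - 1)⁻¹ * ((x + 1) / 2) ^ (s - 1) + (x - 1) / 2 * ((x + 1) / 2) ^ (s - 2)

noncomputable def f2 (s x : ℝ) : ℝ := ((x + 1) / 2) ^ (s - 3) * (s * x + 4 - s) / 4

noncomputable def g (t x : ℝ) : ℝ :=
  if t = 0 then x * Real.log (2 * x / (x + 1))
  else if t = 1 then ((x + 1) / 2) * Real.log ((x + 1) / (2 * x))
  else (t * (t - 1))⁻¹ * (x ^ (1 - t) * ((x + 1) / 2) ^ t - x)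

noncomputable def g1 (t x : ℝ) : ℝ :=
  if t = 0 then Real.log (2 * x / (x + 1)) + 1 - x / (x + 1)
  else if t = 1 then (1 / 2) * Real.log ((x + 1) / (2 * x)) + 1 / 2 - (x + 1) / (2 * x)
  else (t * (t - 1))⁻¹ *
    ((1 - t) * x ^ (-t) * ((x + 1) / 2) ^ t + t * x ^ (1 - t) * ((x + 1) / 2) ^ (t - 1) / 2 - 1)

noncomputable def g2 (t x : ℝ) : ℝ := x ^ (-t - 1) * ((x + 1) / 2) ^ (t - 2) / 4

noncomputable def hfun (s t x : ℝ) : ℝ :=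
  x ^ (t + 1) * ((x + 1) / 2) ^ (s - t - 1) * (s * x + 4 - s)

lemma f_one (s : ℝ) : f s 1 = 0 := by
  unfold f; split <;> simp

lemma g_one (t : ℝ) : g t 1 = 0 := by
  unfold g; split
  · norm_num
  · split <;> norm_num

lemma rpow_shift {w : ℝ} (hw : 0 < w) (a : ℝ) : w ^ (a + 1) = w ^ a * w := by
  rw [Real.rpow_add hw, Real.rpow_one]

lemma hasDerivAt_f {x : ℝ} (hx : 0 < x) (s : ℝ) : HasDerivAt (f s) (f1 s x) x := by
  have hwpos : (0:ℝ) < (x + 1) / 2 := by linarith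
  have hw' : (x + 1) / 2 ≠ 0 := ne_of_gt hwpos
  have hd : HasDerivAt (fun y : ℝ => (y + 1) / 2) (1 / 2) x := by
    simpa using ((hasDerivAt_id x).add_const 1).div_const 2
  by_cases hs : s = 1
  · subst hs
    have heq : f 1 = fun y : ℝ => (y - 1) * Real.log ((y + 1) / 2) := by
      funext y; simp [f]
    have heq1 : f1 1 x = Real.log ((x + 1) / 2) + (x - 1) / (x + 1) := by
      norm_num [f1]
    rw [heq, heq1]
    have hlog : HasDerivAt (fun y : ℝ => Real.log ((y + 1) / 2)) (1 / 2 / ((x + 1) / 2)) x :=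
      hd.log hw'
    have := ((hasDerivAt_id x).sub_const 1).mul hlog
    refine this.congr_deriv ?_
    simp only [id]
    field_simp
  · have heq : f s = fun y : ℝ => (s - 1)⁻¹ * ((y - 1) * ((y + 1) / 2) ^ (s - 1)) := by
      funext y; simp only [f, if_neg hs]
    have heq1 : f1 s x =
        (s - 1)⁻¹ * ((x + 1) / 2) ^ (s - 1) + (x - 1) / 2 * ((x + 1) / 2) ^ (s - 2) := by
      simp only [f1, if_neg hs]
    rw [heq, heq1]
    have hrpow : HasDerivAt (fun y : ℝ => ((y + 1) / 2) ^ (s - 1))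
        (1 / 2 * (s - 1) * ((x + 1) / 2) ^ (s - 1 - 1)) x := hd.rpow_const (Or.inl hw')
    rw [show s - 1 - 1 = s - 2 by ring] at hrpow
    have hs1 : s - 1 ≠ 0 := fun h => hs (by linarith)
    have := (((hasDerivAt_id x).sub_const 1).mul hrpow).const_mul (s - 1)⁻¹
    refine this.congr_deriv ?_
    simp only [id]
    field_simp

lemma hasDerivAt_f1 {x : ℝ} (hx : 0 < x) (s : ℝ) : HasDerivAt (f1 s) (f2 s x) x := by
  have hwpos : (0:ℝ) < (x + 1) / 2 := by linarith
  have hw' : (x + 1) / 2 ≠ 0 := ne_of_gt hwpos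
  have hx1 : x + 1 ≠ 0 := by linarith
  have hd : HasDerivAt (fun y : ℝ => (y + 1) / 2) (1 / 2) x := by
    simpa using ((hasDerivAt_id x).add_const 1).div_const 2
  by_cases hs : s = 1
  · subst hs
    have heq : f1 1 = fun y : ℝ => Real.log ((y + 1) / 2) + (y - 1) / (y + 1) := by
      funext y; simp [f1]
    rw [heq]
    have hlog : HasDerivAt (fun y : ℝ => Real.log ((y + 1) / 2)) (1 / 2 / ((x + 1) / 2)) x :=
      hd.log hw'
    have hq : HasDerivAt (fun y : ℝ => (y - 1) / (y + 1))
        ((1 * (x + 1) - (x - 1) * 1) / (x + 1) ^ 2) x :=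
      ((hasDerivAt_id x).sub_const 1).div ((hasDerivAt_id x).add_const 1) hx1
    have := hlog.add hq
    refine this.congr_deriv ?_
    unfold f2
    have h2 : ((x + 1) / 2 : ℝ) ^ ((1:ℝ) - 3) = 4 / ((x + 1) * (x + 1)) := by
      rw [show (1:ℝ) - 3 = -(2:ℝ) by norm_num, Real.rpow_neg hwpos.le, Real.rpow_two]
      rw [show ((x + 1) / 2 : ℝ) ^ 2 = (x + 1) * (x + 1) / 4 by ring]
      rw [inv_div]
    rw [h2]
    field_simp
    ring
  · have heq : f1 s = fun y : ℝ =>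
        (s - 1)⁻¹ * ((y + 1) / 2) ^ (s - 1) + (y - 1) / 2 * ((y + 1) / 2) ^ (s - 2) := by
      funext y; simp only [f1, if_neg hs]
    rw [heq]
    have hs1 : s - 1 ≠ 0 := fun h => hs (by linarith)
    have h1 : HasDerivAt (fun y : ℝ => ((y + 1) / 2) ^ (s - 1))
        (1 / 2 * (s - 1) * ((x + 1) / 2) ^ (s - 1 - 1)) x := hd.rpow_const (Or.inl hw')
    have h2 : HasDerivAt (fun y : ℝ => ((y + 1) / 2) ^ (s - 2))
        (1 / 2 * (s - 2) * ((x + 1) / 2) ^ (s - 2 - 1)) x := hd.rpow_const (Or.inl hw')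
    have h3 : HasDerivAt (fun y : ℝ => (y - 1) / 2) (1 / 2) x := by
      simpa using ((hasDerivAt_id x).sub_const 1).div_const 2
    have := (h1.const_mul (s - 1)⁻¹).add (h3.mul h2)
    refine this.congr_deriv ?_
    rw [show s - 1 - 1 = s - 2 by ring, show s - 2 - 1 = s - 3 by ring]
    unfold f2
    have e1 : ((x + 1) / 2 : ℝ) ^ (s - 1) = ((x + 1) / 2) ^ (s - 3) * ((x + 1) / 2) ^ (2:ℕ) := by
      rw [← Real.rpow_natCast _ 2, ← Real.rpow_add hwpos]; congr 1; push_cast; ring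
    have e2 : ((x + 1) / 2 : ℝ) ^ (s - 2) = ((x + 1) / 2) ^ (s - 3) * ((x + 1) / 2) := by
      rw [show s - 2 = s - 3 + 1 by ring, rpow_shift hwpos]
    rw [e2]
    field_simp
    ring

lemma hasDerivAt_g {x : ℝ} (hx : 0 < x) (t : ℝ) : HasDerivAt (g t) (g1 t x) x := by
  have hwpos : (0:ℝ) < (x + 1) / 2 := by linarith
  have hx1 : x + 1 ≠ 0 := by linarith
  have hx0 : x ≠ 0 := ne_of_gt hx
  have hd : HasDerivAt (fun y : ℝ => (y + 1) / 2) (1 / 2) x := by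
    simpa using ((hasDerivAt_id x).add_const 1).div_const 2
  by_cases ht0 : t = 0
  · subst ht0
    have heq : g 0 = fun y : ℝ => y * Real.log (2 * y / (y + 1)) := by
      funext y; simp [g]
    have heq1 : g1 0 x = Real.log (2 * x / (x + 1)) + 1 - x / (x + 1) := by simp [g1]
    rw [heq, heq1]
    have hq : HasDerivAt (fun y : ℝ => 2 * y / (y + 1))
        ((2 * (x + 1) - 2 * x) / (x + 1) ^ 2) x := by
      have := HasDerivAt.div ((hasDerivAt_id x).const_mul 2) ((hasDerivAt_id x).add_const 1) hx1
      simpa [Pi.div_def] using this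
    have hval : 2 * x / (x + 1) ≠ 0 := by positivity
    have hlog := hq.log hval
    have := (hasDerivAt_id x).mul hlog
    refine this.congr_deriv ?_
    simp only [id_eq]
    field_simp
    ring
  · by_cases ht1 : t = 1
    · subst ht1
      have heq : g 1 = fun y : ℝ => ((y + 1) / 2) * Real.log ((y + 1) / (2 * y)) := by
        funext y; simp [g]
      have heq1 : g1 1 x = (1 / 2) * Real.log ((x + 1) / (2 * x)) + 1 / 2 - (x + 1) / (2 * x) := by
        simp [g1]
      rw [heq, heq1]
      have hx2 : 2 * x ≠ 0 := by positivity
      have hq : HasDerivAt (fun y : ℝ => (y + 1) / (2 * y))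
          ((2 * x - (x + 1) * 2) / (2 * x) ^ 2) x := by
        have := HasDerivAt.div ((hasDerivAt_id x).add_const 1) ((hasDerivAt_id x).const_mul 2) hx2
        simpa [Pi.div_def] using this
      have hval : (x + 1) / (2 * x) ≠ 0 := by positivity
      have hlog := hq.log hval
      have := hd.mul hlog
      refine this.congr_deriv ?_
      field_simp
      ring
    · have heq : g t = fun y : ℝ =>
          (t * (t - 1))⁻¹ * (y ^ (1 - t) * ((y + 1) / 2) ^ t - y) := by
        funext y; simp only [g, if_neg ht0, if_neg ht1]
      have heq1 : g1 t x = (t * (t - 1))⁻¹ *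
          ((1 - t) * x ^ (-t) * ((x + 1) / 2) ^ t
            + t * x ^ (1 - t) * ((x + 1) / 2) ^ (t - 1) / 2 - 1) := by
        simp only [g1, if_neg ht0, if_neg ht1]
      rw [heq, heq1]
      have h1 : HasDerivAt (fun y : ℝ => y ^ (1 - t)) ((1 - t) * x ^ (1 - t - 1)) x := by
        simpa using (Real.hasDerivAt_rpow_const (p := 1 - t) (Or.inl hx0))
      rw [show 1 - t - 1 = -t by ring] at h1
      have h2 : HasDerivAt (fun y : ℝ => ((y + 1) / 2) ^ t)
          (1 / 2 * t * ((x + 1) / 2) ^ (t - 1)) x := hd.rpow_const (Or.inl (ne_of_gt hwpos))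
      have := ((h1.mul h2).sub (hasDerivAt_id x)).const_mul (t * (t - 1))⁻¹
      refine this.congr_deriv ?_
      try simp only [id_eq]
      try ring
      try (field_simp; ring)

lemma hasDerivAt_g1 {x : ℝ} (hx : 0 < x) (t : ℝ) : HasDerivAt (g1 t) (g2 t x) x := by
  have hwpos : (0:ℝ) < (x + 1) / 2 := by linarith
  have hx1 : x + 1 ≠ 0 := by linarith
  have hx0 : x ≠ 0 := ne_of_gt hx
  have hd : HasDerivAt (fun y : ℝ => (y + 1) / 2) (1 / 2) x := by
    simpa using ((hasDerivAt_id x).add_const 1).div_const 2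
  have hxm1 : x ^ (-(1:ℝ)-1) = (x * x)⁻¹ := by
    rw [show -(1:ℝ) - 1 = -(2:ℝ) by norm_num, Real.rpow_neg hx.le, Real.rpow_two, pow_two]
  by_cases ht0 : t = 0
  · subst ht0
    have heq : g1 0 = fun y : ℝ => Real.log (2 * y / (y + 1)) + 1 - y / (y + 1) := by
      funext y; simp [g1]
    rw [heq]
    have hq : HasDerivAt (fun y : ℝ => 2 * y / (y + 1))
        ((2 * (x + 1) - 2 * x) / (x + 1) ^ 2) x := by
      have := HasDerivAt.div ((hasDerivAt_id x).const_mul 2) ((hasDerivAt_id x).add_const 1) hx1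
      simpa [Pi.div_def] using this
    have hval : 2 * x / (x + 1) ≠ 0 := by positivity
    have hlog := hq.log hval
    have hq2 : HasDerivAt (fun y : ℝ => y / (y + 1))
        ((x + 1 - x) / (x + 1) ^ 2) x := by
      have := HasDerivAt.div (hasDerivAt_id x) ((hasDerivAt_id x).add_const 1) hx1
      simpa [Pi.div_def] using this
    have := (hlog.add_const 1).sub hq2
    refine this.congr_deriv ?_
    unfold g2
    rw [show (-(0:ℝ) - 1) = -(1:ℝ) by norm_num, Real.rpow_neg_one]
    rw [show ((0:ℝ) - 2) = -(2:ℝ) by norm_num, Real.rpow_neg hwpos.le, Real.rpow_two]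
    rw [show (((x + 1) / 2 : ℝ) ^ 2)⁻¹ = 4 / ((x + 1) * (x + 1)) by
      rw [show ((x + 1) / 2 : ℝ) ^ 2 = (x + 1) * (x + 1) / 4 by ring, inv_div]]
    field_simp
    ring
  · by_cases ht1 : t = 1
    · subst ht1
      have heq : g1 1 = fun y : ℝ =>
          (1 / 2) * Real.log ((y + 1) / (2 * y)) + 1 / 2 - (y + 1) / (2 * y) := by
        funext y; simp [g1]
      rw [heq]
      have hx2 : 2 * x ≠ 0 := by positivity
      have hq : HasDerivAt (fun y : ℝ => (y + 1) / (2 * y))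
          ((2 * x - (x + 1) * 2) / (2 * x) ^ 2) x := by
        have := HasDerivAt.div ((hasDerivAt_id x).add_const 1) ((hasDerivAt_id x).const_mul 2) hx2
        simpa [Pi.div_def] using this
      have hval : (x + 1) / (2 * x) ≠ 0 := by positivity
      have hlog := hq.log hval
      have := ((hlog.const_mul (1/2 : ℝ)).add_const (1/2 : ℝ)).sub hq
      refine this.congr_deriv ?_
      unfold g2
      rw [show ((1:ℝ) - 2) = -(1:ℝ) by norm_num, Real.rpow_neg_one, hxm1]
      field_simp
      ring
    · have heq : g1 t = fun y : ℝ => (t * (t - 1))⁻¹ *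
          ((1 - t) * y ^ (-t) * ((y + 1) / 2) ^ t
            + t * y ^ (1 - t) * ((y + 1) / 2) ^ (t - 1) / 2 - 1) := by
        funext y; simp only [g1, if_neg ht0, if_neg ht1]
      rw [heq]
      have ha : HasDerivAt (fun y : ℝ => y ^ (-t)) (-t * x ^ (-t - 1)) x := by
        simpa using (Real.hasDerivAt_rpow_const (p := -t) (Or.inl hx0))
      have hb : HasDerivAt (fun y : ℝ => y ^ (1 - t)) ((1 - t) * x ^ (-t)) x := by
        have := Real.hasDerivAt_rpow_const (p := 1 - t) (x := x) (Or.inl hx0)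
        rw [show 1 - t - 1 = -t by ring] at this
        exact this
      have hc : HasDerivAt (fun y : ℝ => ((y + 1) / 2) ^ t)
          (1 / 2 * t * ((x + 1) / 2) ^ (t - 1)) x := hd.rpow_const (Or.inl (ne_of_gt hwpos))
      have hce : HasDerivAt (fun y : ℝ => ((y + 1) / 2) ^ (t - 1))
          (1 / 2 * (t - 1) * ((x + 1) / 2) ^ (t - 2)) x := by
        have := hd.rpow_const (p := t - 1) (Or.inl (ne_of_gt hwpos))
        rw [show t - 1 - 1 = t - 2 by ring] at this
        exact this
      have hA := ((ha.const_mul (1 - t)).mul hc)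
      have hB := (((hb.const_mul t).mul hce)).div_const 2
      have := (((hA.add hB).sub_const 1)).const_mul (t * (t - 1))⁻¹
      refine this.congr_deriv ?_
      -- now a pure rpow-algebra identity
      have hw0 : ((x + 1) / 2 : ℝ) ≠ 0 := ne_of_gt hwpos
      have ex1 : x ^ (-t) = x ^ (-t - 1) * x := by
        rw [← Real.rpow_add_one hx0]; congr 1; ring
      have ex2 : x ^ (1 - t) = x ^ (-t - 1) * x * x := by
        rw [← Real.rpow_add_one hx0, ← Real.rpow_add_one hx0]; congr 1; ring
      have ew1 : ((x + 1) / 2 : ℝ) ^ (t - 1) = ((x + 1) / 2) ^ (t - 2) * ((x + 1) / 2) := by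
        rw [← Real.rpow_add_one hw0]; congr 1; ring
      have ew0 : ((x + 1) / 2 : ℝ) ^ t
          = ((x + 1) / 2) ^ (t - 2) * ((x + 1) / 2) * ((x + 1) / 2) := by
        rw [← Real.rpow_add_one hw0, ← Real.rpow_add_one hw0]; congr 1; ring
      rw [ex1, ex2, ew1, ew0]
      unfold g2
      have ht1' : t - 1 ≠ 0 := fun h => ht1 (by linarith)
      field_simp
      ring

lemma f2_eq {x : ℝ} (hx : 0 < x) (s t : ℝ) : f2 s x = hfun s t x * g2 t x := by
  have hwpos : (0:ℝ) < (x + 1) / 2 := by linarith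
  unfold f2 g2 hfun
  rw [show x ^ (t + 1) * ((x + 1) / 2) ^ (s - t - 1) * (s * x + 4 - s) *
      (x ^ (-t - 1) * ((x + 1) / 2) ^ (t - 2) / 4)
      = (x ^ (t + 1) * x ^ (-t - 1)) *
        (((x + 1) / 2) ^ (s - t - 1) * ((x + 1) / 2) ^ (t - 2)) * (s * x + 4 - s) / 4 by ring]
  rw [← Real.rpow_add hx, ← Real.rpow_add hwpos,
    show t + 1 + (-t - 1) = 0 by ring, show s - t - 1 + (t - 2) = s - 3 by ring, Real.rpow_zero]
  ring

lemma g2_pos {x : ℝ} (hx : 0 < x) (t : ℝ) : 0 < g2 t x := by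
  have hwpos : (0:ℝ) < (x + 1) / 2 := by linarith
  unfold g2
  have := Real.rpow_pos_of_pos hx (-t - 1)
  have := Real.rpow_pos_of_pos hwpos (t - 2)
  positivity

lemma hfun_eq {x : ℝ} (hx : 0 < x) (s t : ℝ) :
    hfun s t x = (2 * x / (x + 1)) ^ (t + 1) * ((x + 1) / 2) ^ s * (s * x + 4 - s) := by
  have hwpos : (0:ℝ) < (x + 1) / 2 := by linarith
  have hx1 : (0:ℝ) < x + 1 := by linarith
  unfold hfun
  rw [show 2 * x / (x + 1) = x / ((x + 1) / 2) by field_simp,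
    Real.div_rpow hx.le hwpos.le,
    show s - t - 1 = s - (t + 1) by ring, Real.rpow_sub hwpos]
  field_simp

lemma hfun_nonneg {x : ℝ} (hx : 0 < x) {s t : ℝ} (hs0 : 0 ≤ s) (hs4 : s ≤ 4) :
    0 ≤ hfun s t x := by
  have hwpos : (0:ℝ) < (x + 1) / 2 := by linarith
  have h1 : (0:ℝ) ≤ x ^ (t + 1) := (Real.rpow_pos_of_pos hx _).le
  have h2 : (0:ℝ) ≤ ((x + 1) / 2) ^ (s - t - 1) := (Real.rpow_pos_of_pos hwpos _).le
  have h3 : (0:ℝ) ≤ s * x + 4 - s := by nlinarith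
  unfold hfun; positivity

lemma hfun_mono {a b : ℝ} (ha : 0 < a) (hab : a ≤ b) {s t : ℝ}
    (hs0 : 0 ≤ s) (hs4 : s ≤ 4) (ht : -1 ≤ t) :
    hfun s t a ≤ hfun s t b := by
  have hb : 0 < b := lt_of_lt_of_le ha hab
  rw [hfun_eq ha s t, hfun_eq hb s t]
  have ha1 : (0:ℝ) < a + 1 := by linarith
  have hb1 : (0:ℝ) < b + 1 := by linarith
  have hA : (0:ℝ) ≤ 2 * a / (a + 1) := by positivity
  have hAB : 2 * a / (a + 1) ≤ 2 * b / (b + 1) := by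
    rw [div_le_div_iff₀ ha1 hb1]; nlinarith
  have e1 : (2 * a / (a + 1)) ^ (t + 1) ≤ (2 * b / (b + 1)) ^ (t + 1) :=
    Real.rpow_le_rpow hA hAB (by linarith)
  have e2 : ((a + 1) / 2 : ℝ) ^ s ≤ ((b + 1) / 2) ^ s :=
    Real.rpow_le_rpow (by linarith) (by linarith) hs0
  have e3 : s * a + 4 - s ≤ s * b + 4 - s := by nlinarith
  have p1 : (0:ℝ) ≤ (2 * b / (b + 1)) ^ (t + 1) := Real.rpow_nonneg (by positivity) _
  have p2 : (0:ℝ) ≤ ((a + 1) / 2 : ℝ) ^ s := Real.rpow_nonneg (by linarith) _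
  have p2' : (0:ℝ) ≤ ((b + 1) / 2 : ℝ) ^ s := Real.rpow_nonneg (by linarith) _
  have p3 : (0:ℝ) ≤ s * a + 4 - s := by nlinarith
  have step1 : (2 * a / (a + 1)) ^ (t + 1) * ((a + 1) / 2) ^ s
      ≤ (2 * b / (b + 1)) ^ (t + 1) * ((b + 1) / 2) ^ s :=
    mul_le_mul e1 e2 p2 p1
  exact mul_le_mul step1 e3 p3 (by positivity)

/-- Pointwise lower bound. -/
lemma pointwise (s t c : ℝ) {r R : ℝ} (hr : 0 < r) (hr1 : r ≤ 1) (h1R : 1 ≤ R)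
    (hcle : ∀ x ∈ Set.Icc r R, c ≤ hfun s t x) :
    ∀ x ∈ Set.Icc r R,
      c * g t x + (f1 s 1 - c * g1 t 1) * (x - 1) ≤ f s x := by
  set K := f1 s 1 - c * g1 t 1 with hK
  have := nonneg_of_convex hr hr1 h1R
    (fun x => f s x - c * g t x - K * (x - 1))
    (fun x => f1 s x - c * g1 t x - K)
    (fun x => f2 s x - c * g2 t x)
    (fun x hx => (((hasDerivAt_f hx s).sub ((hasDerivAt_g hx t).const_mul c)).sub
      (by simpa using ((hasDerivAt_id x).sub_const 1).const_mul K)))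
    (fun x hx =>
      ((hasDerivAt_f1 hx s).sub ((hasDerivAt_g1 hx t).const_mul c)).sub_const K)
    (by simp [f_one, g_one])
    (by rw [hK]; ring)
    (fun x hx => by
      have hx0 : (0:ℝ) < x := lt_of_lt_of_le hr hx.1
      have h1 := hcle x hx
      have h2 := (g2_pos hx0 t).le
      show 0 ≤ f2 s x - c * g2 t x
      rw [f2_eq hx0 s t]
      nlinarith)
  intro x hx
  have h := this x hx
  linarith

/-- Pointwise upper bound. -/
lemma pointwise' (s t c : ℝ) {r R : ℝ} (hr : 0 < r) (hr1 : r ≤ 1) (h1R : 1 ≤ R)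
    (hcge : ∀ x ∈ Set.Icc r R, hfun s t x ≤ c) :
    ∀ x ∈ Set.Icc r R,
      f s x ≤ c * g t x + (f1 s 1 - c * g1 t 1) * (x - 1) := by
  set K := f1 s 1 - c * g1 t 1 with hK
  have := nonneg_of_convex hr hr1 h1R
    (fun x => c * g t x + K * (x - 1) - f s x)
    (fun x => c * g1 t x + K - f1 s x)
    (fun x => c * g2 t x - f2 s x)
    (fun x hx => ((((hasDerivAt_g hx t).const_mul c).add
      (by simpa using ((hasDerivAt_id x).sub_const 1).const_mul K)).sub (hasDerivAt_f hx s)))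
    (fun x hx =>
      (((hasDerivAt_g1 hx t).const_mul c).add_const K).sub (hasDerivAt_f1 hx s))
    (by simp [f_one, g_one])
    (by rw [hK]; ring)
    (fun x hx => by
      have hx0 : (0:ℝ) < x := lt_of_lt_of_le hr hx.1
      have h1 := hcge x hx
      have h2 := (g2_pos hx0 t).le
      show 0 ≤ c * g2 t x - f2 s x
      rw [f2_eq hx0 s t]
      nlinarith)
  intro x hx
  have h := this x hx
  linarith


lemma zeta_eq (n : ℕ) (s : ℝ) (p q : Fin n → ℝ) (hp : ∀ i, 0 < p i) (hq : ∀ i, 0 < q i) :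
    zeta n s p q = ∑ i, q i * f s (p i / q i) := by
  have key : ∀ i, (p i / q i + 1) / 2 = (p i + q i) / (2 * q i) := by
    intro i; have := (hq i).ne'; field_simp
  by_cases hs : s = 1
  · subst hs
    unfold zeta f
    rw [if_pos rfl]
    refine Finset.sum_congr rfl fun i _ => ?_
    rw [if_pos rfl, key i]
    have := (hq i).ne'
    field_simp
  · unfold zeta f
    rw [if_neg hs, Finset.mul_sum]
    refine Finset.sum_congr rfl fun i _ => ?_
    rw [if_neg hs, key i]
    have hqi := (hq i).ne'
    have hs1 : s - 1 ≠ 0 := fun h => hs (by linarith)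
    field_simp

lemma omega_eq (n : ℕ) (t : ℝ) (p q : Fin n → ℝ) (hp : ∀ i, 0 < p i) (hq : ∀ i, 0 < q i)
    (hp1 : ∑ i, p i = 1) (hq1 : ∑ i, q i = 1) :
    Omega n t p q = ∑ i, q i * g t (p i / q i) := by
  have key : ∀ i, (p i / q i + 1) / 2 = (p i + q i) / (2 * q i) := by
    intro i; have := (hq i).ne'; field_simp
  by_cases ht0 : t = 0
  · subst ht0
    unfold Omega g
    rw [if_pos rfl]
    refine Finset.sum_congr rfl fun i _ => ?_
    rw [if_pos rfl]
    have h1 := (hq i).ne'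
    have h2 : p i + q i ≠ 0 := by have := hp i; have := hq i; positivity
    have hpi := hp i
    have hqi := hq i
    rw [show 2 * (p i / q i) / (p i / q i + 1) = 2 * p i / (p i + q i) by
      rw [div_eq_div_iff (by positivity) (by positivity)]; field_simp]
    field_simp
  · by_cases ht1 : t = 1
    · subst ht1
      unfold Omega g
      rw [if_neg one_ne_zero, if_pos rfl]
      refine Finset.sum_congr rfl fun i _ => ?_
      rw [if_neg one_ne_zero, if_pos rfl, key i]
      have h1 := (hq i).ne'
      have h2 : p i + q i ≠ 0 := by have := hp i; have := hq i; positivity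
      have h3 := (hp i).ne'
      rw [show (p i / q i + 1) / (2 * (p i / q i)) = (p i + q i) / (2 * p i) by
        rw [div_eq_div_iff (by positivity) (by positivity)]
        field_simp]
      field_simp
    · unfold Omega g
      simp only [if_neg ht0, if_neg ht1]
      have per : ∀ i, q i * ((t * (t - 1))⁻¹ * ((p i / q i) ^ (1 - t)
          * ((p i / q i + 1) / 2) ^ t - p i / q i))
          = (t * (t - 1))⁻¹ * (p i * ((p i + q i) / (2 * p i)) ^ t - p i) := by
        intro i
        have hpi := hp i; have hqi := hq i
        have hx : (0:ℝ) < p i / q i := by positivity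
        have e1 : (p i / q i : ℝ) ^ (1 - t) = (p i / q i) * (p i / q i) ^ (-t) := by
          rw [show (1 - t) = -t + 1 by ring, Real.rpow_add_one (ne_of_gt hx)]; ring
        have e2 : ((p i / q i + 1) / 2 : ℝ) ^ t * (p i / q i) ^ (-t)
            = ((p i + q i) / (2 * p i)) ^ t := by
          rw [Real.rpow_neg hx.le, ← div_eq_mul_inv,
            ← Real.div_rpow (by positivity : (0:ℝ) ≤ (p i / q i + 1) / 2) hx.le]
          congr 1
          field_simp
        rw [e1]
        rw [show (p i / q i) * (p i / q i) ^ (-t) * ((p i / q i + 1) / 2) ^ t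
            = (p i / q i) * (((p i / q i + 1) / 2) ^ t * (p i / q i) ^ (-t)) by ring, e2]
        have ht0' : t ≠ 0 := ht0
        have ht1' : t - 1 ≠ 0 := fun h => ht1 (by linarith)
        field_simp
      rw [Finset.sum_congr rfl fun i _ => per i, ← Finset.mul_sum]
      congr 1
      rw [Finset.sum_sub_distrib, hp1]


end Stmt13Aux

theorem stmt_13 (s t : ℝ) (hs0 : 0 ≤ s) (hs4 : s ≤ 4) (ht : -1 ≤ t)
    (n : ℕ) (hn : 2 ≤ n) (p q : Fin n → ℝ)
    (hp : ∀ i, 0 < p i) (hq : ∀ i, 0 < q i)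
    (hp1 : ∑ i, p i = 1) (hq1 : ∑ i, q i = 1)
    (r R : ℝ) (hr : 0 < r) (hrR : r ≤ R)
    (hbound : ∀ i, r ≤ p i / q i ∧ p i / q i ≤ R) :
    r ^ (t + 1) * ((r + 1) / 2) ^ (s - t - 1) * (s * r + 4 - s) * Omega n t p q ≤ zeta n s p q ∧
      zeta n s p q ≤ R ^ (t + 1) * ((R + 1) / 2) ^ (s - t - 1) * (s * R + 4 - s) * Omega n t p q := by
  have hqx : ∀ i, q i * (p i / q i) = p i := fun i => by
    rw [mul_comm]; exact div_mul_cancel₀ (p i) (hq i).ne'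
  have hmem : ∀ i, p i / q i ∈ Set.Icc r R := fun i => ⟨(hbound i).1, (hbound i).2⟩
  have hr1 : r ≤ 1 := by
    calc r = ∑ i, q i * r := by rw [← Finset.sum_mul, hq1, one_mul]
      _ ≤ ∑ i, q i * (p i / q i) :=
        Finset.sum_le_sum fun i _ => mul_le_mul_of_nonneg_left (hbound i).1 (hq i).le
      _ = ∑ i, p i := Finset.sum_congr rfl fun i _ => hqx i
      _ = 1 := hp1
  have h1R : 1 ≤ R := by
    calc (1:ℝ) = ∑ i, p i := hp1.symm
      _ = ∑ i, q i * (p i / q i) := (Finset.sum_congr rfl fun i _ => hqx i).symm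
      _ ≤ ∑ i, q i * R :=
        Finset.sum_le_sum fun i _ => mul_le_mul_of_nonneg_left (hbound i).2 (hq i).le
      _ = R := by rw [← Finset.sum_mul, hq1, one_mul]
  have hze := Stmt13Aux.zeta_eq n s p q hp hq
  have hom := Stmt13Aux.omega_eq n t p q hp hq hp1 hq1
  constructor
  · -- lower bound
    set c := Stmt13Aux.hfun s t r with hc
    set K := Stmt13Aux.f1 s 1 - c * Stmt13Aux.g1 t 1 with hKdef
    have hcle : ∀ x ∈ Set.Icc r R, c ≤ Stmt13Aux.hfun s t x := fun x hx =>
      Stmt13Aux.hfun_mono hr hx.1 hs0 hs4 ht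
    have hpt := Stmt13Aux.pointwise s t c hr hr1 h1R hcle
    have hsum : ∑ i, q i * (c * Stmt13Aux.g t (p i / q i) + K * (p i / q i - 1))
        ≤ ∑ i, q i * Stmt13Aux.f s (p i / q i) :=
      Finset.sum_le_sum fun i _ =>
        mul_le_mul_of_nonneg_left (hpt _ (hmem i)) (hq i).le
    have expand : ∀ i, q i * (c * Stmt13Aux.g t (p i / q i) + K * (p i / q i - 1))
        = c * (q i * Stmt13Aux.g t (p i / q i)) + K * (p i - q i) := fun i => by
      linear_combination K * hqx i
    have lhs_eq : ∑ i, q i * (c * Stmt13Aux.g t (p i / q i) + K * (p i / q i - 1))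
        = c * Omega n t p q := by
      rw [Finset.sum_congr rfl fun i _ => expand i, Finset.sum_add_distrib,
        ← Finset.mul_sum, ← Finset.mul_sum, Finset.sum_sub_distrib, hp1, hq1, ← hom]
      ring
    show Stmt13Aux.hfun s t r * Omega n t p q ≤ zeta n s p q
    rw [hze, ← hc]
    calc c * Omega n t p q
        = ∑ i, q i * (c * Stmt13Aux.g t (p i / q i) + K * (p i / q i - 1)) := lhs_eq.symm
      _ ≤ ∑ i, q i * Stmt13Aux.f s (p i / q i) := hsum
  · -- upper bound
    set c := Stmt13Aux.hfun s t R with hc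
    set K := Stmt13Aux.f1 s 1 - c * Stmt13Aux.g1 t 1 with hKdef
    have hcge : ∀ x ∈ Set.Icc r R, Stmt13Aux.hfun s t x ≤ c := fun x hx =>
      Stmt13Aux.hfun_mono (lt_of_lt_of_le hr hx.1) hx.2 hs0 hs4 ht
    have hpt := Stmt13Aux.pointwise' s t c hr hr1 h1R hcge
    have hsum : ∑ i, q i * Stmt13Aux.f s (p i / q i)
        ≤ ∑ i, q i * (c * Stmt13Aux.g t (p i / q i) + K * (p i / q i - 1)) :=
      Finset.sum_le_sum fun i _ =>
        mul_le_mul_of_nonneg_left (hpt _ (hmem i)) (hq i).le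
    have expand : ∀ i, q i * (c * Stmt13Aux.g t (p i / q i) + K * (p i / q i - 1))
        = c * (q i * Stmt13Aux.g t (p i / q i)) + K * (p i - q i) := fun i => by
      linear_combination K * hqx i
    have lhs_eq : ∑ i, q i * (c * Stmt13Aux.g t (p i / q i) + K * (p i / q i - 1))
        = c * Omega n t p q := by
      rw [Finset.sum_congr rfl fun i _ => expand i, Finset.sum_add_distrib,
        ← Finset.mul_sum, ← Finset.mul_sum, Finset.sum_sub_distrib, hp1, hq1, ← hom]
      ring
    show zeta n s p q ≤ Stmt13Aux.hfun s t R * Omega n t p q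
    rw [hze, ← hc]
    calc ∑ i, q i * Stmt13Aux.f s (p i / q i)
        ≤ ∑ i, q i * (c * Stmt13Aux.g t (p i / q i) + K * (p i / q i - 1)) := hsum
      _ = c * Omega n t p q := lhs_eq
end

section
/- Let s, t ∈ ℝ with 0 ≤ s ≤ 4, t ≤ s, and t(4−s) ≤ 6s − s² − 4. Then for all P, Q ∈ Γ_n with r ≤ p_i/q_i ≤ R for all i: ((R+1)/(2R))^{s−t−1} (((4−s)R + s)/R) Ω_t(P||Q) ≤ ζ_s(Q||P) ≤ ((r+1)/(2r))^{s−t−1} (((4−s)r + s)/r) Ω_t(P||Q). -/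
open Real Finset

noncomputable def Ff (t x : ℝ) : ℝ :=
  if t = 0 then x * Real.log (2 * x / (x + 1))
  else if t = 1 then ((x + 1) / 2) * Real.log ((x + 1) / (2 * x))
  else (t * (t - 1))⁻¹ * (x * ((x + 1) / (2 * x)) ^ t - 1)

noncomputable def Ff' (t x : ℝ) : ℝ :=
  if t = 0 then Real.log (2 * x / (x + 1)) + 1 / (x + 1)
  else if t = 1 then (1 / 2) * Real.log ((x + 1) / (2 * x)) - 1 / (2 * x)
  else (t * (t - 1))⁻¹ * (((x + 1) / (2 * x)) ^ t - (t / (2 * x)) * ((x + 1) / (2 * x)) ^ (t - 1))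

noncomputable def Ff2 (t x : ℝ) : ℝ := ((x + 1) / (2 * x)) ^ (t - 2) / (4 * x ^ 3)

noncomputable def Gg (s x : ℝ) : ℝ :=
  if s = 1 then (1 - x) * Real.log ((x + 1) / (2 * x))
  else (s - 1)⁻¹ * ((1 - x) * ((x + 1) / (2 * x)) ^ (s - 1))

noncomputable def Gg' (s x : ℝ) : ℝ :=
  if s = 1 then -Real.log ((x + 1) / (2 * x)) + (x - 1) / (x * (x + 1))
  else (s - 1)⁻¹ *
    (-((x + 1) / (2 * x)) ^ (s - 1) + (x - 1) * (s - 1) / (2 * x ^ 2) * ((x + 1) / (2 * x)) ^ (s - 2))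

noncomputable def Gg2 (s x : ℝ) : ℝ := ((x + 1) / (2 * x)) ^ (s - 3) * ((4 - s) * x + s) / (4 * x ^ 4)

noncomputable def rho (s t x : ℝ) : ℝ := ((x + 1) / (2 * x)) ^ (s - t - 1) * ((4 - s) * x + s) / x

/- basic facts -/
lemma hB_deriv {x : ℝ} (hx : 0 < x) :
    HasDerivAt (fun y : ℝ => (y + 1) / (2 * y)) (-(1 / (2 * x ^ 2))) x := by
  have h2 : HasDerivAt (fun y : ℝ => 2 * y) 2 x := by
    simpa using (hasDerivAt_id x).const_mul 2
  have h : HasDerivAt (fun y : ℝ => (y + 1) / (2 * y))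
      ((1 * (2 * x) - (x + 1) * 2) / (2 * x) ^ 2) x :=
    ((hasDerivAt_id x).add_const 1).div h2 (by positivity)
  convert h using 1
  field_simp
  ring

lemma hBpos {x : ℝ} (hx : 0 < x) : 0 < (x + 1) / (2 * x) := by positivity

lemma Ff_one (t : ℝ) : Ff t 1 = 0 := by
  unfold Ff
  split_ifs <;> norm_num

lemma Gg_one (s : ℝ) : Gg s 1 = 0 := by
  unfold Gg
  split_ifs <;> norm_num

lemma hC_deriv {x : ℝ} (hx : 0 < x) :
    HasDerivAt (fun y : ℝ => 2 * y / (y + 1)) (2 / (x + 1) ^ 2) x := by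
  have h2 : HasDerivAt (fun y : ℝ => 2 * y) 2 x := by
    simpa using (hasDerivAt_id x).const_mul 2
  have h : HasDerivAt (fun y : ℝ => 2 * y / (y + 1))
      ((2 * (x + 1) - 2 * x * 1) / (x + 1) ^ 2) x :=
    h2.div ((hasDerivAt_id x).add_const 1) (by positivity)
  convert h using 1
  field_simp
  ring

lemma rpow_neg_two {b : ℝ} (hb : 0 < b) : b ^ (-2 : ℝ) = (b * b)⁻¹ := by
  rw [show (-2 : ℝ) = (-1) + (-1) by norm_num, Real.rpow_add hb, Real.rpow_neg_one]
  rw [mul_inv]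

lemma hFf_deriv (t : ℝ) {x : ℝ} (hx : 0 < x) : HasDerivAt (Ff t) (Ff' t x) x := by
  have hx0 : x ≠ 0 := ne_of_gt hx
  have hx1 : (0:ℝ) < x + 1 := by linarith
  have hB : (0:ℝ) < (x + 1) / (2 * x) := hBpos hx
  rcases eq_or_ne t 0 with rfl | ht0
  · have hc : (2 * x / (x + 1) : ℝ) ≠ 0 := by positivity
    have hlog : HasDerivAt (fun y : ℝ => Real.log (2 * y / (y + 1)))
        (2 / (x + 1) ^ 2 / (2 * x / (x + 1))) x := (hC_deriv hx).log hc
    have h : HasDerivAt (fun y : ℝ => y * Real.log (2 * y / (y + 1)))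
        (1 * Real.log (2 * x / (x + 1)) + x * (2 / (x + 1) ^ 2 / (2 * x / (x + 1)))) x :=
      (hasDerivAt_id x).mul hlog
    have hFfeq : Ff 0 = fun y : ℝ => y * Real.log (2 * y / (y + 1)) := by
      funext y; simp [Ff]
    rw [hFfeq]
    convert h using 1
    simp only [Ff', ↓reduceIte]
    field_simp
  rcases eq_or_ne t 1 with rfl | ht1
  · have hBne : ((x + 1) / (2 * x) : ℝ) ≠ 0 := ne_of_gt hB
    have hlog : HasDerivAt (fun y : ℝ => Real.log ((y + 1) / (2 * y)))
        (-(1 / (2 * x ^ 2)) / ((x + 1) / (2 * x))) x := (hB_deriv hx).log hBne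
    have h : HasDerivAt (fun y : ℝ => ((y + 1) / 2) * Real.log ((y + 1) / (2 * y)))
        ((1/2) * Real.log ((x + 1) / (2 * x)) +
          ((x + 1) / 2) * (-(1 / (2 * x ^ 2)) / ((x + 1) / (2 * x)))) x := by
      have hi : HasDerivAt (fun y : ℝ => (y + 1) / 2) (1/2) x := by
        simpa using ((hasDerivAt_id x).add_const 1).div_const 2
      exact hi.mul hlog
    have hFfeq : Ff 1 = fun y : ℝ => ((y + 1) / 2) * Real.log ((y + 1) / (2 * y)) := by
      funext y; simp [Ff]
    rw [hFfeq]
    convert h using 1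
    simp only [Ff', if_neg one_ne_zero, ↓reduceIte]
    field_simp
    ring
  · have hBne : ((x + 1) / (2 * x) : ℝ) ≠ 0 := ne_of_gt hB
    have hpow : HasDerivAt (fun y : ℝ => ((y + 1) / (2 * y)) ^ t)
        (-(1 / (2 * x ^ 2)) * t * ((x + 1) / (2 * x)) ^ (t - 1)) x :=
      (hB_deriv hx).rpow_const (Or.inl hBne)
    have h : HasDerivAt (fun y : ℝ => (t * (t - 1))⁻¹ * (y * ((y + 1) / (2 * y)) ^ t - 1))
        ((t * (t - 1))⁻¹ * (1 * ((x + 1) / (2 * x)) ^ t +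
          x * (-(1 / (2 * x ^ 2)) * t * ((x + 1) / (2 * x)) ^ (t - 1)))) x :=
      (((hasDerivAt_id x).mul hpow).sub_const 1).const_mul _
    have hFfeq : Ff t = fun y : ℝ => (t * (t - 1))⁻¹ * (y * ((y + 1) / (2 * y)) ^ t - 1) := by
      funext y; simp [Ff, ht0, ht1]
    rw [hFfeq]
    convert h using 1
    simp only [Ff', if_neg ht0, if_neg ht1]
    congr 1
    field_simp
    ring

lemma hFf'_deriv (t : ℝ) {x : ℝ} (hx : 0 < x) : HasDerivAt (Ff' t) (Ff2 t x) x := by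
  have hx0 : x ≠ 0 := ne_of_gt hx
  have hx1 : (0:ℝ) < x + 1 := by linarith
  have hB : (0:ℝ) < (x + 1) / (2 * x) := hBpos hx
  have hBne : ((x + 1) / (2 * x) : ℝ) ≠ 0 := ne_of_gt hB
  have h2y : HasDerivAt (fun y : ℝ => 2 * y) 2 x := by
    simpa using (hasDerivAt_id x).const_mul 2
  rcases eq_or_ne t 0 with rfl | ht0
  · have hc : (2 * x / (x + 1) : ℝ) ≠ 0 := by positivity
    have hlog : HasDerivAt (fun y : ℝ => Real.log (2 * y / (y + 1)))
        (2 / (x + 1) ^ 2 / (2 * x / (x + 1))) x := (hC_deriv hx).log hc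
    have hinv : HasDerivAt (fun y : ℝ => 1 / (y + 1)) (-1 / (x + 1) ^ 2) x := by
      simpa [one_div, Pi.inv_def] using ((hasDerivAt_id x).add_const 1).inv (by positivity)
    have hFfeq : Ff' 0 = fun y : ℝ => Real.log (2 * y / (y + 1)) + 1 / (y + 1) := by
      funext y; simp [Ff']
    rw [hFfeq]
    refine (hlog.fun_add hinv).congr_deriv ?_
    unfold Ff2
    rw [show (0:ℝ) - 2 = -2 by norm_num, rpow_neg_two hB]
    field_simp
    ring
  rcases eq_or_ne t 1 with rfl | ht1
  · have hlog : HasDerivAt (fun y : ℝ => Real.log ((y + 1) / (2 * y)))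
        (-(1 / (2 * x ^ 2)) / ((x + 1) / (2 * x))) x := (hB_deriv hx).log hBne
    have hinv : HasDerivAt (fun y : ℝ => 1 / (2 * y)) (-2 / (2 * x) ^ 2) x := by
      simpa [one_div, Pi.inv_def] using h2y.inv (by positivity)
    have hFfeq : Ff' 1 = fun y : ℝ => (1/2) * Real.log ((y + 1) / (2 * y)) - 1 / (2 * y) := by
      funext y; simp [Ff']
    rw [hFfeq]
    refine ((hlog.const_mul (1/2 : ℝ)).fun_sub hinv).congr_deriv ?_
    unfold Ff2
    rw [show (1:ℝ) - 2 = -1 by norm_num, Real.rpow_neg_one]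
    field_simp
    ring
  · have hpow1 : HasDerivAt (fun y : ℝ => ((y + 1) / (2 * y)) ^ (t - 1))
        (-(1 / (2 * x ^ 2)) * (t - 1) * ((x + 1) / (2 * x)) ^ (t - 1 - 1)) x :=
      (hB_deriv hx).rpow_const (Or.inl hBne)
    have hpow0 : HasDerivAt (fun y : ℝ => ((y + 1) / (2 * y)) ^ t)
        (-(1 / (2 * x ^ 2)) * t * ((x + 1) / (2 * x)) ^ (t - 1)) x :=
      (hB_deriv hx).rpow_const (Or.inl hBne)
    have hq : HasDerivAt (fun y : ℝ => t / (2 * y)) ((0 * (2 * x) - t * 2) / (2 * x) ^ 2) x :=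
      (hasDerivAt_const x t).div h2y (by positivity)
    have h : HasDerivAt
        (fun y : ℝ => (t * (t - 1))⁻¹ *
          (((y + 1) / (2 * y)) ^ t - (t / (2 * y)) * ((y + 1) / (2 * y)) ^ (t - 1)))
        ((t * (t - 1))⁻¹ *
          (-(1 / (2 * x ^ 2)) * t * ((x + 1) / (2 * x)) ^ (t - 1) -
            (((0 * (2 * x) - t * 2) / (2 * x) ^ 2) * ((x + 1) / (2 * x)) ^ (t - 1) +
              (t / (2 * x)) * (-(1 / (2 * x ^ 2)) * (t - 1) * ((x + 1) / (2 * x)) ^ (t - 1 - 1))))) x :=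
      (hpow0.sub (hq.mul hpow1)).const_mul _
    have hFfeq : Ff' t = fun y : ℝ => (t * (t - 1))⁻¹ *
        (((y + 1) / (2 * y)) ^ t - (t / (2 * y)) * ((y + 1) / (2 * y)) ^ (t - 1)) := by
      funext y; simp [Ff', ht0, ht1]
    rw [hFfeq]
    convert h using 1
    rw [show t - 1 - 1 = t - 2 by ring]
    unfold Ff2
    have htt : t - 1 ≠ 0 := sub_ne_zero.mpr ht1
    field_simp
    ring

lemma hGg_deriv (s : ℝ) {x : ℝ} (hx : 0 < x) : HasDerivAt (Gg s) (Gg' s x) x := by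
  have hx0 : x ≠ 0 := ne_of_gt hx
  have hx1 : (0:ℝ) < x + 1 := by linarith
  have hB : (0:ℝ) < (x + 1) / (2 * x) := hBpos hx
  have hBne : ((x + 1) / (2 * x) : ℝ) ≠ 0 := ne_of_gt hB
  have hone : HasDerivAt (fun y : ℝ => 1 - y) (-1) x := by
    simpa using (hasDerivAt_id x).const_sub 1
  rcases eq_or_ne s 1 with rfl | hs1
  · have hlog : HasDerivAt (fun y : ℝ => Real.log ((y + 1) / (2 * y)))
        (-(1 / (2 * x ^ 2)) / ((x + 1) / (2 * x))) x := (hB_deriv hx).log hBne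
    have h : HasDerivAt (fun y : ℝ => (1 - y) * Real.log ((y + 1) / (2 * y)))
        ((-1) * Real.log ((x + 1) / (2 * x)) +
          (1 - x) * (-(1 / (2 * x ^ 2)) / ((x + 1) / (2 * x)))) x := hone.mul hlog
    have hGgeq : Gg 1 = fun y : ℝ => (1 - y) * Real.log ((y + 1) / (2 * y)) := by
      funext y; simp [Gg]
    rw [hGgeq]
    convert h using 1
    simp only [Gg', ↓reduceIte]
    field_simp
    ring
  · have hpow : HasDerivAt (fun y : ℝ => ((y + 1) / (2 * y)) ^ (s - 1))
        (-(1 / (2 * x ^ 2)) * (s - 1) * ((x + 1) / (2 * x)) ^ (s - 1 - 1)) x :=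
      (hB_deriv hx).rpow_const (Or.inl hBne)
    have h : HasDerivAt (fun y : ℝ => (s - 1)⁻¹ * ((1 - y) * ((y + 1) / (2 * y)) ^ (s - 1)))
        ((s - 1)⁻¹ * ((-1) * ((x + 1) / (2 * x)) ^ (s - 1) +
          (1 - x) * (-(1 / (2 * x ^ 2)) * (s - 1) * ((x + 1) / (2 * x)) ^ (s - 1 - 1)))) x :=
      (hone.mul hpow).const_mul _
    have hGgeq : Gg s = fun y : ℝ => (s - 1)⁻¹ * ((1 - y) * ((y + 1) / (2 * y)) ^ (s - 1)) := by
      funext y; simp [Gg, hs1]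
    rw [hGgeq]
    convert h using 1
    rw [show s - 1 - 1 = s - 2 by ring]
    simp only [Gg', if_neg hs1]
    congr 1
    field_simp
    ring

lemma hGg'_deriv (s : ℝ) {x : ℝ} (hx : 0 < x) : HasDerivAt (Gg' s) (Gg2 s x) x := by
  have hx0 : x ≠ 0 := ne_of_gt hx
  have hx1 : (0:ℝ) < x + 1 := by linarith
  have hB : (0:ℝ) < (x + 1) / (2 * x) := hBpos hx
  have hBne : ((x + 1) / (2 * x) : ℝ) ≠ 0 := ne_of_gt hB
  rcases eq_or_ne s 1 with rfl | hs1
  · have hlog : HasDerivAt (fun y : ℝ => Real.log ((y + 1) / (2 * y)))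
        (-(1 / (2 * x ^ 2)) / ((x + 1) / (2 * x))) x := (hB_deriv hx).log hBne
    have hden : HasDerivAt (fun y : ℝ => y * (y + 1)) (1 * (x + 1) + x * 1) x :=
      (hasDerivAt_id x).mul ((hasDerivAt_id x).add_const 1)
    have hfrac : HasDerivAt (fun y : ℝ => (y - 1) / (y * (y + 1)))
        ((1 * (x * (x + 1)) - (x - 1) * (1 * (x + 1) + x * 1)) / (x * (x + 1)) ^ 2) x :=
      ((hasDerivAt_id x).sub_const 1).div hden (by positivity)
    have hGgeq : Gg' 1 = fun y : ℝ =>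
        -Real.log ((y + 1) / (2 * y)) + (y - 1) / (y * (y + 1)) := by
      funext y; simp [Gg']
    rw [hGgeq]
    refine (hlog.fun_neg.fun_add hfrac).congr_deriv ?_
    unfold Gg2
    rw [show (1:ℝ) - 3 = -2 by norm_num, rpow_neg_two hB]
    field_simp
    ring
  · have hpow1 : HasDerivAt (fun y : ℝ => ((y + 1) / (2 * y)) ^ (s - 1))
        (-(1 / (2 * x ^ 2)) * (s - 1) * ((x + 1) / (2 * x)) ^ (s - 1 - 1)) x :=
      (hB_deriv hx).rpow_const (Or.inl hBne)
    have hpow2 : HasDerivAt (fun y : ℝ => ((y + 1) / (2 * y)) ^ (s - 2))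
        (-(1 / (2 * x ^ 2)) * (s - 2) * ((x + 1) / (2 * x)) ^ (s - 2 - 1)) x :=
      (hB_deriv hx).rpow_const (Or.inl hBne)
    have hden : HasDerivAt (fun y : ℝ => 2 * y ^ 2) (2 * (2 * x ^ 1)) x := by
      exact ((hasDerivAt_pow 2 x).const_mul 2).congr_deriv (by push_cast; ring)
    have hq : HasDerivAt (fun y : ℝ => (y - 1) * (s - 1) / (2 * y ^ 2))
        ((1 * (s - 1) * (2 * x ^ 2) - (x - 1) * (s - 1) * (2 * (2 * x ^ 1))) / (2 * x ^ 2) ^ 2) x :=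
      (((hasDerivAt_id x).sub_const 1).mul_const (s - 1)).div hden (by positivity)
    have h : HasDerivAt (fun y : ℝ => (s - 1)⁻¹ *
        (-((y + 1) / (2 * y)) ^ (s - 1) +
          (y - 1) * (s - 1) / (2 * y ^ 2) * ((y + 1) / (2 * y)) ^ (s - 2)))
        ((s - 1)⁻¹ *
          (-(-(1 / (2 * x ^ 2)) * (s - 1) * ((x + 1) / (2 * x)) ^ (s - 1 - 1)) +
            (((1 * (s - 1) * (2 * x ^ 2) - (x - 1) * (s - 1) * (2 * (2 * x ^ 1))) / (2 * x ^ 2) ^ 2) *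
              ((x + 1) / (2 * x)) ^ (s - 2) +
              (x - 1) * (s - 1) / (2 * x ^ 2) *
                (-(1 / (2 * x ^ 2)) * (s - 2) * ((x + 1) / (2 * x)) ^ (s - 2 - 1))))) x :=
      (hpow1.neg.add (hq.mul hpow2)).const_mul _
    have hGgeq : Gg' s = fun y : ℝ => (s - 1)⁻¹ *
        (-((y + 1) / (2 * y)) ^ (s - 1) +
          (y - 1) * (s - 1) / (2 * y ^ 2) * ((y + 1) / (2 * y)) ^ (s - 2)) := by
      funext y; simp [Gg', hs1]
    rw [hGgeq]
    convert h using 1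
    rw [show s - 1 - 1 = s - 2 by ring, show s - 2 - 1 = s - 3 by ring]
    rw [show s - 2 = (s - 3) + 1 by ring, Real.rpow_add hB, Real.rpow_one]
    unfold Gg2
    have hs1' : s - 1 ≠ 0 := sub_ne_zero.mpr hs1
    field_simp
    ring

noncomputable def rhoD (s t x : ℝ) : ℝ :=
  -(((x + 1) / (2 * x)) ^ (s - t - 1) * ((s - t - 1) * ((4 - s) * x + s) + s * (x + 1)) /
    (x ^ 2 * (x + 1)))

lemma hrho_deriv (s t : ℝ) {x : ℝ} (hx : 0 < x) : HasDerivAt (rho s t) (rhoD s t x) x := by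
  have hx0 : x ≠ 0 := ne_of_gt hx
  have hx1 : (0:ℝ) < x + 1 := by linarith
  have hB : (0:ℝ) < (x + 1) / (2 * x) := hBpos hx
  have hBne : ((x + 1) / (2 * x) : ℝ) ≠ 0 := ne_of_gt hB
  have hpow : HasDerivAt (fun y : ℝ => ((y + 1) / (2 * y)) ^ (s - t - 1))
      (-(1 / (2 * x ^ 2)) * (s - t - 1) * ((x + 1) / (2 * x)) ^ (s - t - 1 - 1)) x :=
    (hB_deriv hx).rpow_const (Or.inl hBne)
  have hP : HasDerivAt (fun y : ℝ => (4 - s) * y + s) (4 - s) x := by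
    simpa using ((hasDerivAt_id x).const_mul (4 - s)).add_const s
  have h : HasDerivAt (fun y : ℝ => ((y + 1) / (2 * y)) ^ (s - t - 1) * ((4 - s) * y + s) / y)
      (((-(1 / (2 * x ^ 2)) * (s - t - 1) * ((x + 1) / (2 * x)) ^ (s - t - 1 - 1) *
          ((4 - s) * x + s) + ((x + 1) / (2 * x)) ^ (s - t - 1) * (4 - s)) * x -
        ((x + 1) / (2 * x)) ^ (s - t - 1) * ((4 - s) * x + s) * 1) / x ^ 2) x :=
    (hpow.mul hP).div (hasDerivAt_id x) hx0
  have hrhoeq : rho s t = fun y : ℝ =>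
      ((y + 1) / (2 * y)) ^ (s - t - 1) * ((4 - s) * y + s) / y := by
    funext y; simp [rho]
  rw [hrhoeq]
  convert h using 1
  rw [show s - t - 1 - 1 = (s - t - 1) + (-1) by ring, Real.rpow_add hB, Real.rpow_neg_one]
  unfold rhoD
  field_simp
  ring

lemma rhoD_nonpos (s t : ℝ) (hs0 : 0 ≤ s) (hs4 : s ≤ 4) (hst : t ≤ s)
    (hts : t * (4 - s) ≤ 6 * s - s ^ 2 - 4) {x : ℝ} (hx : 0 < x) : rhoD s t x ≤ 0 := by
  have hx1 : (0:ℝ) < x + 1 := by linarith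
  have hB : (0:ℝ) < (x + 1) / (2 * x) := hBpos hx
  have hA : 0 ≤ (s - t - 1) * (4 - s) + s := by nlinarith
  have hBc : 0 ≤ s * (s - t) := mul_nonneg hs0 (by linarith)
  have hQ : 0 ≤ (s - t - 1) * ((4 - s) * x + s) + s * (x + 1) := by nlinarith
  unfold rhoD
  have hpow : (0:ℝ) ≤ ((x + 1) / (2 * x)) ^ (s - t - 1) := (Real.rpow_pos_of_pos hB _).le
  have : (0:ℝ) ≤ ((x + 1) / (2 * x)) ^ (s - t - 1) *
      ((s - t - 1) * ((4 - s) * x + s) + s * (x + 1)) / (x ^ 2 * (x + 1)) := by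
    apply div_nonneg (mul_nonneg hpow hQ) (by positivity)
  linarith

lemma rho_anti (s t : ℝ) (hs0 : 0 ≤ s) (hs4 : s ≤ 4) (hst : t ≤ s)
    (hts : t * (4 - s) ≤ 6 * s - s ^ 2 - 4) {r R : ℝ} (hr : 0 < r) :
    AntitoneOn (rho s t) (Set.Icc r R) := by
  apply antitoneOn_of_deriv_nonpos (convex_Icc r R)
  · exact fun y hy => (hrho_deriv s t (lt_of_lt_of_le hr hy.1)).continuousAt.continuousWithinAt
  · intro y hy
    rw [interior_Icc] at hy
    exact (hrho_deriv s t (lt_of_lt_of_le hr hy.1.le)).differentiableAt.differentiableWithinAt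
  · intro y hy
    rw [interior_Icc] at hy
    have hy0 : 0 < y := lt_of_lt_of_le hr hy.1.le
    rw [(hrho_deriv s t hy0).deriv]
    exact rhoD_nonpos s t hs0 hs4 hst hts hy0

lemma Ff2_pos (t : ℝ) {x : ℝ} (hx : 0 < x) : 0 < Ff2 t x := by
  have hB : (0:ℝ) < (x + 1) / (2 * x) := hBpos hx
  unfold Ff2
  exact div_pos (Real.rpow_pos_of_pos hB _) (by positivity)

lemma Gg2_eq (s t : ℝ) {x : ℝ} (hx : 0 < x) : Gg2 s x = Ff2 t x * rho s t x := by
  have hB : (0:ℝ) < (x + 1) / (2 * x) := hBpos hx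
  have hx0 : x ≠ 0 := ne_of_gt hx
  unfold Gg2 Ff2 rho
  rw [show s - 3 = (t - 2) + (s - t - 1) by ring, Real.rpow_add hB]
  field_simp

lemma tangent {r R : ℝ} (hr : 0 < r) (h1r : r ≤ 1) (h1R : 1 ≤ R) {h h' h2 : ℝ → ℝ}
    (hd1 : ∀ y ∈ Set.Icc r R, HasDerivAt h (h' y) y)
    (hd2 : ∀ y ∈ Set.Icc r R, HasDerivAt h' (h2 y) y)
    (h2nn : ∀ y ∈ Set.Icc r R, 0 ≤ h2 y)
    (hh1 : h 1 = 0) (hh'1 : h' 1 = 0) :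
    ∀ y ∈ Set.Icc r R, 0 ≤ h y := by
  have h1mem : (1:ℝ) ∈ Set.Icc r R := ⟨h1r, h1R⟩
  have hmono : MonotoneOn h' (Set.Icc r R) := by
    apply monotoneOn_of_deriv_nonneg (convex_Icc r R)
    · exact fun y hy => (hd2 y hy).continuousAt.continuousWithinAt
    · intro y hy
      exact (hd2 y (interior_subset hy)).differentiableAt.differentiableWithinAt
    · intro y hy
      rw [(hd2 y (interior_subset hy)).deriv]
      exact h2nn y (interior_subset hy)
  intro y hy
  rcases lt_trichotomy y 1 with hlt | heq | hgt
  · obtain ⟨c, hc, hceq⟩ := exists_hasDerivAt_eq_slope h h' hlt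
      (fun z hz => (hd1 z ⟨le_trans hy.1 hz.1, le_trans hz.2 h1R⟩).continuousAt.continuousWithinAt)
      (fun z hz => hd1 z ⟨le_trans hy.1 hz.1.le, le_trans hz.2.le h1R⟩)
    have hcmem : c ∈ Set.Icc r R := ⟨le_trans hy.1 hc.1.le, le_trans hc.2.le h1R⟩
    have hcle : h' c ≤ 0 := by
      rw [← hh'1]; exact hmono hcmem h1mem hc.2.le
    rw [hh1] at hceq
    have hy1 : (0:ℝ) < 1 - y := by linarith
    rw [eq_div_iff (ne_of_gt hy1)] at hceq
    nlinarith [mul_nonneg (neg_nonneg.mpr hcle) hy1.le]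
  · rw [heq, hh1]
  · obtain ⟨c, hc, hceq⟩ := exists_hasDerivAt_eq_slope h h' hgt
      (fun z hz => (hd1 z ⟨le_trans h1r hz.1, le_trans hz.2 hy.2⟩).continuousAt.continuousWithinAt)
      (fun z hz => hd1 z ⟨le_trans h1r hz.1.le, le_trans hz.2.le hy.2⟩)
    have hcmem : c ∈ Set.Icc r R := ⟨le_trans h1r hc.1.le, le_trans hc.2.le hy.2⟩
    have hcge : 0 ≤ h' c := by
      rw [← hh'1]; exact hmono h1mem hcmem hc.1.le
    rw [hh1] at hceq
    have hy1 : (0:ℝ) < y - 1 := by linarith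
    rw [eq_div_iff (ne_of_gt hy1)] at hceq
    nlinarith [mul_nonneg hcge hy1.le]

lemma key_upper (s t : ℝ) (hs0 : 0 ≤ s) (hs4 : s ≤ 4) (hst : t ≤ s)
    (hts : t * (4 - s) ≤ 6 * s - s ^ 2 - 4) {r R : ℝ} (hr : 0 < r) (h1r : r ≤ 1) (h1R : 1 ≤ R)
    {K : ℝ} (hK : ∀ y ∈ Set.Icc r R, rho s t y ≤ K) :
    ∀ y ∈ Set.Icc r R,
      Gg s y ≤ K * Ff t y + (Gg' s 1 - K * Ff' t 1) * (y - 1) := by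
  set c : ℝ := Gg' s 1 - K * Ff' t 1 with hc
  have main : ∀ y ∈ Set.Icc r R,
      0 ≤ K * Ff t y - Gg s y + c * (y - 1) := by
    apply tangent hr h1r h1R
      (h' := fun y => K * Ff' t y - Gg' s y + c)
      (h2 := fun y => K * Ff2 t y - Gg2 s y)
    · intro y hy
      have hy0 : 0 < y := lt_of_lt_of_le hr hy.1
      have hlin : HasDerivAt (fun z : ℝ => c * (z - 1)) c y := by
        simpa using ((hasDerivAt_id y).sub_const 1).const_mul c
      exact (((hFf_deriv t hy0).const_mul K).sub (hGg_deriv s hy0)).add hlin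
    · intro y hy
      have hy0 : 0 < y := lt_of_lt_of_le hr hy.1
      have := (((hFf'_deriv t hy0).const_mul K).sub (hGg'_deriv s hy0)).add_const c
      simpa using this
    · intro y hy
      have hy0 : 0 < y := lt_of_lt_of_le hr hy.1
      rw [Gg2_eq s t hy0]
      have := mul_le_mul_of_nonneg_left (hK y hy) (Ff2_pos t hy0).le
      nlinarith [Ff2_pos t hy0]
    · simp [Ff_one, Gg_one]
    · ring
  intro y hy
  have := main y hy
  linarith

lemma key_lower (s t : ℝ) (hs0 : 0 ≤ s) (hs4 : s ≤ 4) (hst : t ≤ s)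
    (hts : t * (4 - s) ≤ 6 * s - s ^ 2 - 4) {r R : ℝ} (hr : 0 < r) (h1r : r ≤ 1) (h1R : 1 ≤ R)
    {K : ℝ} (hK : ∀ y ∈ Set.Icc r R, K ≤ rho s t y) :
    ∀ y ∈ Set.Icc r R,
      K * Ff t y + (Gg' s 1 - K * Ff' t 1) * (y - 1) ≤ Gg s y := by
  set c : ℝ := Gg' s 1 - K * Ff' t 1 with hc
  have main : ∀ y ∈ Set.Icc r R,
      0 ≤ Gg s y - K * Ff t y - c * (y - 1) := by
    apply tangent hr h1r h1R
      (h' := fun y => Gg' s y - K * Ff' t y - c)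
      (h2 := fun y => Gg2 s y - K * Ff2 t y)
    · intro y hy
      have hy0 : 0 < y := lt_of_lt_of_le hr hy.1
      have hlin : HasDerivAt (fun z : ℝ => c * (z - 1)) c y := by
        simpa using ((hasDerivAt_id y).sub_const 1).const_mul c
      exact ((hGg_deriv s hy0).sub ((hFf_deriv t hy0).const_mul K)).sub hlin
    · intro y hy
      have hy0 : 0 < y := lt_of_lt_of_le hr hy.1
      have := ((hGg'_deriv s hy0).sub ((hFf'_deriv t hy0).const_mul K)).sub_const c
      simpa using this
    · intro y hy
      have hy0 : 0 < y := lt_of_lt_of_le hr hy.1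
      rw [Gg2_eq s t hy0]
      have := mul_le_mul_of_nonneg_left (hK y hy) (Ff2_pos t hy0).le
      nlinarith [Ff2_pos t hy0]
    · simp [Ff_one, Gg_one]
    · ring
  intro y hy
  have := main y hy
  linarith

lemma base_eq {a b : ℝ} (ha : 0 < a) (hb : 0 < b) :
    (a / b + 1) / (2 * (a / b)) = (a + b) / (2 * a) := by
  rw [div_eq_div_iff (by positivity) (by positivity)]
  field_simp

lemma Omega_eq (n : ℕ) (t : ℝ) (p q : Fin n → ℝ) (hp : ∀ i, 0 < p i) (hq : ∀ i, 0 < q i)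
    (hq1 : ∑ i, q i = 1) : Omega n t p q = ∑ i, q i * Ff t (p i / q i) := by
  unfold Omega Ff
  split_ifs with h0 h1
  · apply Finset.sum_congr rfl
    intro i _
    have hpi := hp i; have hqi := hq i
    have e1 : 2 * (p i / q i) / (p i / q i + 1) = 2 * p i / (p i + q i) := by
      rw [div_eq_div_iff (by positivity) (by positivity)]
      field_simp
    rw [e1]
    generalize Real.log (2 * p i / (p i + q i)) = L
    field_simp
  · apply Finset.sum_congr rfl
    intro i _
    have hpi := hp i; have hqi := hq i
    rw [base_eq hpi hqi]
    generalize Real.log ((p i + q i) / (2 * p i)) = L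
    field_simp
  · have e : ∀ i ∈ Finset.univ (α := Fin n),
        q i * ((t * (t - 1))⁻¹ * (p i / q i * ((p i / q i + 1) / (2 * (p i / q i))) ^ t - 1)) =
        (t * (t - 1))⁻¹ * (p i * ((p i + q i) / (2 * p i)) ^ t) - (t * (t - 1))⁻¹ * q i := by
      intro i _
      have hpi := hp i; have hqi := hq i
      rw [base_eq hpi hqi]
      generalize ((p i + q i) / (2 * p i) : ℝ) ^ t = A
      rw [show q i * ((t * (t - 1))⁻¹ * (p i / q i * A - 1)) =
            (t * (t - 1))⁻¹ * (q i * (p i / q i * A - 1)) by ring,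
          show (t * (t - 1))⁻¹ * (p i * A) - (t * (t - 1))⁻¹ * q i =
            (t * (t - 1))⁻¹ * (p i * A - q i) by ring]
      congr 1
      field_simp
    rw [Finset.sum_congr rfl e, Finset.sum_sub_distrib, ← Finset.mul_sum, ← Finset.mul_sum, hq1]
    ring

lemma zeta_eq (n : ℕ) (s : ℝ) (p q : Fin n → ℝ) (hp : ∀ i, 0 < p i) (hq : ∀ i, 0 < q i) :
    zeta n s q p = ∑ i, q i * Gg s (p i / q i) := by
  unfold zeta Gg
  split_ifs with h1
  · apply Finset.sum_congr rfl
    intro i _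
    have hpi := hp i; have hqi := hq i
    rw [base_eq hpi hqi, show (p i + q i) / (2 * p i) = (q i + p i) / (2 * p i) by ring_nf]
    generalize Real.log ((q i + p i) / (2 * p i)) = L
    field_simp
  · rw [Finset.mul_sum]
    apply Finset.sum_congr rfl
    intro i _
    have hpi := hp i; have hqi := hq i
    rw [base_eq hpi hqi, show (p i + q i) / (2 * p i) = (q i + p i) / (2 * p i) by ring_nf]
    generalize ((q i + p i) / (2 * p i) : ℝ) ^ (s - 1) = A
    rw [show q i * ((s - 1)⁻¹ * ((1 - p i / q i) * A)) =
          (s - 1)⁻¹ * (q i * (1 - p i / q i) * A) by ring,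
        show (s - 1)⁻¹ * ((q i - p i) * A) = (s - 1)⁻¹ * ((q i - p i) * A) by ring]
    congr 1
    rw [show q i * (1 - p i / q i) * A = (q i * (1 - p i / q i)) * A by ring]
    congr 1
    field_simp

theorem stmt_15 (s t : ℝ) (hs0 : 0 ≤ s) (hs4 : s ≤ 4) (hst : t ≤ s) (hts : t * (4 - s) ≤ 6 * s - s ^ 2 - 4)
    (n : ℕ) (hn : 2 ≤ n) (p q : Fin n → ℝ)
    (hp : ∀ i, 0 < p i) (hq : ∀ i, 0 < q i)
    (hp1 : ∑ i, p i = 1) (hq1 : ∑ i, q i = 1)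
    (r R : ℝ) (hr : 0 < r) (hrR : r ≤ R)
    (hbound : ∀ i, r ≤ p i / q i ∧ p i / q i ≤ R) :
    ((R + 1) / (2 * R)) ^ (s - t - 1) * (((4 - s) * R + s) / R) * Omega n t p q ≤ zeta n s q p ∧
      zeta n s q p ≤ ((r + 1) / (2 * r)) ^ (s - t - 1) * (((4 - s) * r + s) / r) * Omega n t p q := by
  have hxi : ∀ i, p i / q i ∈ Set.Icc r R := fun i => ⟨(hbound i).1, (hbound i).2⟩
  have hple : ∀ i, p i ≤ R * q i := fun i => by
    have := (hbound i).2; rwa [div_le_iff₀ (hq i)] at this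
  have hpge : ∀ i, r * q i ≤ p i := fun i => by
    have := (hbound i).1; rwa [le_div_iff₀ (hq i)] at this
  have h1R : 1 ≤ R := by
    have h : (1:ℝ) ≤ ∑ i, R * q i := by
      rw [← hp1]; exact Finset.sum_le_sum (fun i _ => hple i)
    rwa [← Finset.mul_sum, hq1, mul_one] at h
  have h1r : r ≤ 1 := by
    have h : ∑ i, r * q i ≤ 1 := by
      conv_rhs => rw [← hp1]
      exact Finset.sum_le_sum (fun i _ => hpge i)
    rwa [← Finset.mul_sum, hq1, mul_one] at h
  have hanti := rho_anti s t hs0 hs4 hst hts (r := r) (R := R) hr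
  have hrmem : r ∈ Set.Icc r R := ⟨le_rfl, hrR⟩
  have hRmem : R ∈ Set.Icc r R := ⟨hrR, le_rfl⟩
  have hsum0 : ∑ i, q i * (p i / q i - 1) = 0 := by
    have e : ∀ i ∈ Finset.univ (α := Fin n), q i * (p i / q i - 1) = p i - q i := by
      intro i _
      have := (hq i).ne'
      field_simp
    rw [Finset.sum_congr rfl e, Finset.sum_sub_distrib, hp1, hq1, sub_self]
  have hOm := Omega_eq n t p q hp hq hq1
  have hze := zeta_eq n s p q hp hq
  constructor
  · set K := rho s t R with hKdef
    have hK : ∀ y ∈ Set.Icc r R, K ≤ rho s t y := fun y hy => hanti hy hRmem hy.2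
    have key := key_lower s t hs0 hs4 hst hts hr h1r h1R hK
    set c := Gg' s 1 - K * Ff' t 1 with hc
    have hle : ∑ i, q i * (K * Ff t (p i / q i) + c * (p i / q i - 1)) ≤ zeta n s q p := by
      rw [hze]
      exact Finset.sum_le_sum (fun i _ => mul_le_mul_of_nonneg_left (key _ (hxi i)) (hq i).le)
    have hsplit : ∑ i, q i * (K * Ff t (p i / q i) + c * (p i / q i - 1))
        = K * Omega n t p q := by
      have e : ∀ i ∈ Finset.univ (α := Fin n),
          q i * (K * Ff t (p i / q i) + c * (p i / q i - 1)) =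
          K * (q i * Ff t (p i / q i)) + c * (q i * (p i / q i - 1)) := fun i _ => by ring
      rw [Finset.sum_congr rfl e, Finset.sum_add_distrib, ← Finset.mul_sum, ← Finset.mul_sum,
        hsum0, mul_zero, add_zero, hOm]
    have hKval : ((R + 1) / (2 * R)) ^ (s - t - 1) * (((4 - s) * R + s) / R) = K := by
      rw [hKdef]; unfold rho; rw [mul_div_assoc]
    rw [hKval]
    linarith [hsplit ▸ hle]
  · set K := rho s t r with hKdef
    have hK : ∀ y ∈ Set.Icc r R, rho s t y ≤ K := fun y hy => hanti hrmem hy hy.1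
    have key := key_upper s t hs0 hs4 hst hts hr h1r h1R hK
    set c := Gg' s 1 - K * Ff' t 1 with hc
    have hle : zeta n s q p ≤ ∑ i, q i * (K * Ff t (p i / q i) + c * (p i / q i - 1)) := by
      rw [hze]
      exact Finset.sum_le_sum (fun i _ => mul_le_mul_of_nonneg_left (key _ (hxi i)) (hq i).le)
    have hsplit : ∑ i, q i * (K * Ff t (p i / q i) + c * (p i / q i - 1))
        = K * Omega n t p q := by
      have e : ∀ i ∈ Finset.univ (α := Fin n),
          q i * (K * Ff t (p i / q i) + c * (p i / q i - 1)) =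
          K * (q i * Ff t (p i / q i)) + c * (q i * (p i / q i - 1)) := fun i _ => by ring
      rw [Finset.sum_congr rfl e, Finset.sum_add_distrib, ← Finset.mul_sum, ← Finset.mul_sum,
        hsum0, mul_zero, add_zero, hOm]
    have hKval : ((r + 1) / (2 * r)) ^ (s - t - 1) * (((4 - s) * r + s) / r) = K := by
      rw [hKdef]; unfold rho; rw [mul_div_assoc]
    rw [hKval]
    linarith [hsplit ▸ hle]
end
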